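/- arXiv:0802.2998 — 4 statements merged into one kernel-verified Lean document; each statement's English description precedes it below -/
import Mathlib

section
/- Let d ≥ 2 and 1 < α < 2. Let Γ be a finite Borel measure on the unit sphere S_{2d} of ℝ^{2d}, invariant under s ↦ −s, and identify a point of S_{2d} with (s_1,…,s_d) ∈ ℂ^d via s_j = s_j¹ + i s_j². Define φ : ℂ^d → ℝ by φ(θ₁,…,θ_d) = ∫_{S_{2d}} cos(Re(Σ_{j=1}^d θ_j · conj(s_j))) dΓ(s). For θ_j = θ_j¹ + i θ_j², let D_j = ∂/∂θ_j¹ + i ∂/∂θ_j² act on φ viewed as a function of the 2d real variables. Assume that for all indices i, j, k ∈ {1,…,d} that are not all equal, D_i D_j D_k φ vanishes identically on ℂ^d. Then for every i₀ ∈ {1,…,d} and all θ₁,…,θ_d ∈ ℂ: ∫_{S_{2d}} s_{i₀} · (Σ_{j=1}^d θ_j s_j)^{<α−1>} dΓ(s) = Σ_{j=1}^d ∫_{S_{2d}} s_{i₀} · (θ_j s_j)^{<α−1>} dΓ(s). -/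
open MeasureTheory Real Pointwise

/-- Signed power of a complex number: `z^{<β>} = |z|^{β-1} * conj z` (with `0^{<β>} = 0`). -/
noncomputable def cspow (z : ℂ) (β : ℝ) : ℂ := ((‖z‖ ^ (β - 1) : ℝ) : ℂ) * (starRingEnd ℂ) z

/-- The operator `D_j = ∂/∂θ_j¹ + i ∂/∂θ_j²` acting in the `j`-th complex coordinate,
where `θ_j = θ_j¹ + i θ_j²`. -/
noncomputable def Dop {d : ℕ} (j : Fin d) (f : (Fin d → ℂ) → ℂ) : (Fin d → ℂ) → ℂ :=
  fun θ => deriv (fun t : ℝ => f (Function.update θ j (θ j + t))) 0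
    + Complex.I * deriv (fun t : ℝ => f (Function.update θ j (θ j + t * Complex.I))) 0


namespace Stmt1Aux

variable {d : ℕ}

/-- The real pairing. -/
noncomputable def uu (θ s : Fin d → ℂ) : ℝ := (∑ j, θ j * (starRingEnd ℂ) (s j)).re

lemma uu_eq_sum (θ s : Fin d → ℂ) : uu θ s = ∑ j, (θ j * (starRingEnd ℂ) (s j)).re := by
  simp [uu, Complex.re_sum]

lemma uu_update (θ s : Fin d → ℂ) (j : Fin d) (t : ℝ) (v : ℂ) :
    uu (Function.update θ j (θ j + t * v)) s
      = uu θ s + t * (v * (starRingEnd ℂ) (s j)).re := by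
  have h : ∀ j' : Fin d, (Function.update θ j (θ j + t * v)) j' * (starRingEnd ℂ) (s j')
      = θ j' * (starRingEnd ℂ) (s j')
        + (if j' = j then (t : ℂ) * (v * (starRingEnd ℂ) (s j)) else 0) := by
    intro j'
    rcases eq_or_ne j' j with rfl | hne
    · simp [Function.update_self]; ring
    · simp [Function.update_of_ne hne, hne]
  rw [uu_eq_sum, uu_eq_sum]
  have : ∀ j' : Fin d, ((Function.update θ j (θ j + t * v)) j' * (starRingEnd ℂ) (s j')).re
      = (θ j' * (starRingEnd ℂ) (s j')).re
        + (if j' = j then t * (v * (starRingEnd ℂ) (s j)).re else 0) := by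
    intro j'
    rw [h j', Complex.add_re]
    congr 1
    rcases eq_or_ne j' j with rfl | hne
    · simp [Complex.re_ofReal_mul]
    · simp [hne]
  simp only [this, Finset.sum_add_distrib, Finset.sum_ite_eq' Finset.univ j]
  simp

lemma uu_add_left (θ₁ θ₂ s : Fin d → ℂ) : uu (θ₁ + θ₂) s = uu θ₁ s + uu θ₂ s := by
  simp [uu_eq_sum, add_mul, Finset.sum_add_distrib]

lemma uu_neg_left (θ s : Fin d → ℂ) : uu (-θ) s = -uu θ s := by
  simp [uu_eq_sum, Finset.sum_neg_distrib]
  ring_nf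
  rw [← Finset.sum_neg_distrib]
  exact Finset.sum_congr rfl fun x _ => by ring

lemma uu_zero_left (s : Fin d → ℂ) : uu 0 s = 0 := by simp [uu_eq_sum]

lemma uu_smul_left (c : ℝ) (θ s : Fin d → ℂ) : uu (c • θ) s = c * uu θ s := by
  simp [uu_eq_sum, Pi.smul_apply, Complex.real_smul, mul_assoc, Complex.re_ofReal_mul,
    Finset.mul_sum]

lemma uu_sub_right (θ x y : Fin d → ℂ) : uu θ (x - y) = uu θ x - uu θ y := by
  simp [uu_eq_sum, Pi.sub_apply, map_sub, mul_sub, Finset.sum_sub_distrib]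

lemma uu_neg_right (θ s : Fin d → ℂ) : uu θ (-s) = -uu θ s := by
  simp [uu_eq_sum, Pi.neg_apply, map_neg, mul_neg, Finset.sum_neg_distrib]
  ring_nf
  rw [← Finset.sum_neg_distrib]
  exact Finset.sum_congr rfl fun x _ => by ring

lemma uu_self_pos {z : Fin d → ℂ} (hz : z ≠ 0) : 0 < uu z z := by
  have h : uu z z = ∑ j, Complex.normSq (z j) := by
    simp [uu_eq_sum, Complex.mul_conj, Complex.normSq]
  rw [h]
  obtain ⟨j, hj⟩ : ∃ j, z j ≠ 0 := by
    by_contra hc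
    push_neg at hc
    exact hz (funext hc)
  exact Finset.sum_pos' (fun i _ => Complex.normSq_nonneg _)
    ⟨j, Finset.mem_univ j, by simpa using Complex.normSq_pos.2 hj⟩

lemma continuous_uu (θ : Fin d → ℂ) : Continuous (fun s : Fin d → ℂ => uu θ s) := by
  simp only [uu_eq_sum]
  exact continuous_finset_sum _ fun j _ =>
    (Complex.continuous_re.comp ((continuous_const.mul
      (Complex.continuous_conj.comp (continuous_apply j)))))


lemma norm_exp_I_mul_real (r x : ℝ) : ‖Complex.exp (Complex.I * r * x)‖ = 1 := by
  rw [Complex.norm_exp]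
  simp [Complex.mul_re]

section Psi

variable (Γ : Measure (Fin d → ℂ)) [IsFiniteMeasure Γ]

/-- `Ψ r g θ = ∫ exp(i r u(θ,s)) g(s) dΓ(s)`. -/
noncomputable def Psi (r : ℝ) (g : (Fin d → ℂ) → ℂ) (θ : Fin d → ℂ) : ℂ :=
  ∫ s, Complex.exp (Complex.I * r * uu θ s) * g s ∂Γ

/-- Measurable and a.e. bounded. -/
def Good (g : (Fin d → ℂ) → ℂ) : Prop :=
  Measurable g ∧ ∃ C : ℝ, ∀ᵐ s ∂Γ, ‖g s‖ ≤ C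

lemma good_const : Good Γ (fun _ => (1 : ℂ)) :=
  ⟨measurable_const, 1, Filter.Eventually.of_forall fun _ => by simp⟩

variable {Γ}

lemma good_mul_coord (hbd : ∀ᵐ s ∂Γ, ∀ j, ‖s j‖ ≤ 1) {g : (Fin d → ℂ) → ℂ}
    (hg : Good Γ g) (c : ℂ) (j : Fin d) : Good Γ (fun s => c * s j * g s) := by
  obtain ⟨hm, C, hC⟩ := hg
  refine ⟨(measurable_const.mul (measurable_pi_apply j)).mul hm, ‖c‖ * C, ?_⟩
  filter_upwards [hC, hbd] with s hs hb
  have h1 : ‖c * s j‖ ≤ ‖c‖ := by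
    rw [norm_mul]
    calc ‖c‖ * ‖s j‖ ≤ ‖c‖ * 1 := by
          refine mul_le_mul_of_nonneg_left ?_ (norm_nonneg c)
          simpa using hb j
      _ = ‖c‖ := mul_one _
  calc ‖c * s j * g s‖ = ‖c * s j‖ * ‖g s‖ := norm_mul _ _
    _ ≤ ‖c‖ * C := mul_le_mul h1 hs (norm_nonneg _) (norm_nonneg _)

lemma integrable_psi {g : (Fin d → ℂ) → ℂ} (hg : Good Γ g) (r : ℝ) (θ : Fin d → ℂ) :
    Integrable (fun s => Complex.exp (Complex.I * r * uu θ s) * g s) Γ := by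
  obtain ⟨hm, C, hC⟩ := hg
  refine Integrable.mono' (integrable_const C) ?_ ?_
  · exact ((Complex.measurable_exp.comp
      (measurable_const.mul ((Complex.measurable_ofReal.comp
        (continuous_uu θ).measurable)))).mul hm).aestronglyMeasurable
  · filter_upwards [hC] with s hs
    rw [norm_mul, norm_exp_I_mul_real, one_mul]
    exact hs

lemma hasDerivAt_psi (hbd : ∀ᵐ s ∂Γ, ∀ j, ‖s j‖ ≤ 1)
    {g : (Fin d → ℂ) → ℂ} (hg : Good Γ g) (r : ℝ) (θ : Fin d → ℂ) (j : Fin d)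
    (v : ℂ) (hv : ‖v‖ ≤ 1) :
    Integrable (fun s => Complex.exp (Complex.I * r * uu θ s)
        * (Complex.I * r * ((v * (starRingEnd ℂ) (s j)).re : ℝ) * g s)) Γ ∧
    HasDerivAt (fun t : ℝ => Psi Γ r g (Function.update θ j (θ j + t * v)))
      (∫ s, Complex.exp (Complex.I * r * uu θ s)
        * (Complex.I * r * ((v * (starRingEnd ℂ) (s j)).re : ℝ) * g s) ∂Γ) 0 := by
  obtain ⟨hm, C, hC⟩ := hg
  set c : (Fin d → ℂ) → ℝ := fun s => (v * (starRingEnd ℂ) (s j)).re with hc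
  have hcm : Measurable c :=
    (Complex.measurable_re.comp (measurable_const.mul
      (Complex.continuous_conj.measurable.comp (measurable_pi_apply j))))
  have hcb : ∀ᵐ s ∂Γ, |c s| ≤ 1 := by
    filter_upwards [hbd] with s hb
    calc |c s| ≤ ‖v * (starRingEnd ℂ) (s j)‖ := Complex.abs_re_le_norm _
      _ = ‖v‖ * ‖s j‖ := by simp [map_mul]
      _ ≤ 1 * 1 := mul_le_mul hv (hb j) (norm_nonneg _) zero_le_one
      _ = 1 := one_mul 1
  have hgood_c : Measurable fun s : Fin d → ℂ =>
      Complex.exp (Complex.I * r * uu θ s) * (Complex.I * r * ((c s : ℝ) : ℂ) * g s) :=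
    ((Complex.measurable_exp.comp (measurable_const.mul
      (Complex.measurable_ofReal.comp (continuous_uu θ).measurable))).mul
      ((measurable_const.mul (Complex.measurable_ofReal.comp hcm)).mul hm))
  set F : ℝ → (Fin d → ℂ) → ℂ :=
    fun t s => Complex.exp (Complex.I * r * ((uu θ s : ℂ) + (t : ℂ) * (c s : ℂ))) * g s with hF
  have hnorm : ∀ (t : ℝ) (s : Fin d → ℂ),
      ‖Complex.exp (Complex.I * r * ((uu θ s : ℂ) + (t : ℂ) * (c s : ℂ)))‖ = 1 := by
    intro t s
    rw [show ((uu θ s : ℂ) + (t : ℂ) * (c s : ℂ)) = ((uu θ s + t * c s : ℝ) : ℂ) by push_cast; ring]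
    exact norm_exp_I_mul_real r _
  -- pointwise derivative
  have hpt : ∀ (s : Fin d → ℂ) (t : ℝ), HasDerivAt (F · s)
      (Complex.exp (Complex.I * r * ((uu θ s : ℂ) + (t : ℂ) * (c s : ℂ)))
        * (Complex.I * r * (c s : ℝ)) * g s) t := by
    intro s t
    have h1 : HasDerivAt (fun x : ℝ => uu θ s + x * c s) (c s) t := by
      simpa using ((hasDerivAt_id t).mul_const (c s)).const_add (uu θ s)
    have h2 : HasDerivAt (fun x : ℝ => ((uu θ s : ℂ) + (x : ℂ) * (c s : ℂ))) ((c s : ℝ) : ℂ) t := by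
      have := h1.ofReal_comp
      simpa [Complex.ofReal_add, Complex.ofReal_mul] using this
    exact ((h2.const_mul (Complex.I * r)).cexp).mul_const (g s)
  have hFmeas : ∀ t : ℝ, Measurable (F t) := fun t =>
    (Complex.measurable_exp.comp (measurable_const.mul
      ((Complex.measurable_ofReal.comp (continuous_uu θ).measurable).add
        (measurable_const.mul (Complex.measurable_ofReal.comp hcm))))).mul hm
  have key := hasDerivAt_integral_of_dominated_loc_of_lip (μ := Γ) (F := F)
    (F' := fun s => Complex.exp (Complex.I * r * uu θ s)
        * (Complex.I * r * ((c s : ℝ) : ℂ) * g s))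
    (bound := fun s => |r| * |c s| * ‖g s‖) (x₀ := (0:ℝ)) (s := Metric.ball 0 1) (Metric.ball_mem_nhds _ one_pos)
    (Filter.Eventually.of_forall fun t => (hFmeas t).aestronglyMeasurable)
    (by -- Integrable (F 0)
      refine Integrable.mono' (integrable_const C) (hFmeas 0).aestronglyMeasurable ?_
      filter_upwards [hC] with s hs
      rw [norm_mul, hnorm, one_mul]; exact hs)
    hgood_c.aestronglyMeasurable
    (by -- Lipschitz
      refine Filter.Eventually.of_forall fun s => ?_
      refine (convex_ball (0:ℝ) 1).lipschitzOnWith_of_nnnorm_hasDerivWithin_le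
        (f' := fun t : ℝ => Complex.exp (Complex.I * r * ((uu θ s : ℂ) + ((t : ℝ) : ℂ) * (c s : ℂ)))
          * (Complex.I * r * (c s : ℝ)) * g s)
        (fun t _ => (hpt s t).hasDerivWithinAt) (fun t _ => ?_)
      rw [← NNReal.coe_le_coe, coe_nnnorm, Real.coe_nnabs]
      rw [norm_mul, norm_mul, hnorm, one_mul]
      rw [abs_of_nonneg (by positivity : (0:ℝ) ≤ |r| * |c s| * ‖g s‖)]
      refine mul_le_mul_of_nonneg_right (le_of_eq ?_) (norm_nonneg _)
      simp [norm_mul, abs_mul])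
    (by -- bound integrable
      refine Integrable.mono' (integrable_const (|r| * C))
        ((measurable_const.mul hcm.abs).mul hm.norm).aestronglyMeasurable ?_
      filter_upwards [hC, hcb] with s hs hcs
      rw [Real.norm_eq_abs, abs_of_nonneg (by positivity), mul_assoc]
      refine mul_le_mul_of_nonneg_left ?_ (abs_nonneg r)
      calc |c s| * ‖g s‖ ≤ 1 * C := mul_le_mul hcs hs (norm_nonneg _) zero_le_one
        _ = C := one_mul C)
    (by -- a.e. derivative
      refine Filter.Eventually.of_forall fun s => ?_
      have h0 := hpt s 0
      have heq : Complex.exp (Complex.I * r * ((uu θ s : ℂ) + ((0:ℝ) : ℂ) * (c s : ℂ)))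
          * (Complex.I * r * (c s : ℝ)) * g s
          = Complex.exp (Complex.I * r * uu θ s)
            * (Complex.I * r * ((c s : ℝ) : ℂ) * g s) := by
        norm_num; ring
      rw [heq] at h0
      exact h0)
  obtain ⟨hint, hder⟩ := key
  refine ⟨hint, ?_⟩
  have hfun : (fun t : ℝ => Psi Γ r g (Function.update θ j (θ j + ↑t * v)))
      = fun t => ∫ s, F t s ∂Γ := by
    funext t
    unfold Psi
    refine integral_congr_ae (Filter.Eventually.of_forall fun s => ?_)
    simp only [hF, hc]
    rw [uu_update]
    congr 2
    push_cast
    ring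
  rw [hfun]
  exact hder


lemma psi_congr {g g' : (Fin d → ℂ) → ℂ} (h : ∀ s, g s = g' s) (r : ℝ) (θ : Fin d → ℂ) :
    Psi Γ r g θ = Psi Γ r g' θ :=
  integral_congr_ae (Filter.Eventually.of_forall fun s => by simp only [h s])

lemma psi_const_mul (r : ℝ) (c : ℂ) (g : (Fin d → ℂ) → ℂ) (θ : Fin d → ℂ) :
    Psi Γ r (fun s => c * g s) θ = c * Psi Γ r g θ := by
  unfold Psi
  rw [← integral_const_mul]
  refine integral_congr_ae (Filter.Eventually.of_forall fun s => ?_)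
  simp only []; ring

lemma good_scalar (hbd : ∀ᵐ s ∂Γ, ∀ j, ‖s j‖ ≤ 1) {g : (Fin d → ℂ) → ℂ}
    (hg : Good Γ g) (r : ℝ) (v : ℂ) (hv : ‖v‖ ≤ 1) (j : Fin d) :
    Good Γ (fun s => Complex.I * r * ((v * (starRingEnd ℂ) (s j)).re : ℝ) * g s) := by
  obtain ⟨hm, C, hC⟩ := hg
  refine ⟨(measurable_const.mul (Complex.measurable_ofReal.comp
    (Complex.measurable_re.comp (measurable_const.mul
      (Complex.continuous_conj.measurable.comp (measurable_pi_apply j)))))).mul hm, |r| * C, ?_⟩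
  filter_upwards [hC, hbd] with s hs hb
  have h1 : ‖Complex.I * (r : ℂ) * (((v * (starRingEnd ℂ) (s j)).re : ℝ) : ℂ)‖ ≤ |r| := by
    rw [norm_mul, norm_mul]
    simp only [Complex.norm_I, Complex.norm_real, Real.norm_eq_abs, one_mul]
    calc |r| * |(v * (starRingEnd ℂ) (s j)).re| ≤ |r| * 1 := by
          refine mul_le_mul_of_nonneg_left ?_ (abs_nonneg r)
          calc |(v * (starRingEnd ℂ) (s j)).re| ≤ ‖v * (starRingEnd ℂ) (s j)‖ :=
              Complex.abs_re_le_norm _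
            _ = ‖v‖ * ‖s j‖ := by simp [map_mul]
            _ ≤ 1 * 1 := mul_le_mul hv (hb j) (norm_nonneg _) zero_le_one
            _ = 1 := one_mul 1
      _ = |r| := mul_one _
  calc ‖Complex.I * (r:ℂ) * (((v * (starRingEnd ℂ) (s j)).re : ℝ) : ℂ) * g s‖
      = ‖Complex.I * (r:ℂ) * (((v * (starRingEnd ℂ) (s j)).re : ℝ) : ℂ)‖ * ‖g s‖ := norm_mul _ _
    _ ≤ |r| * C := mul_le_mul h1 hs (norm_nonneg _) (abs_nonneg r)

lemma delta_combine (hbd : ∀ᵐ s ∂Γ, ∀ j, ‖s j‖ ≤ 1) {g : (Fin d → ℂ) → ℂ}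
    (hg : Good Γ g) (r : ℝ) (θ : Fin d → ℂ) (j : Fin d) :
    (∫ s, Complex.exp (Complex.I * r * uu θ s)
        * (Complex.I * r * (((1:ℂ) * (starRingEnd ℂ) (s j)).re : ℝ) * g s) ∂Γ)
      + Complex.I * (∫ s, Complex.exp (Complex.I * r * uu θ s)
        * (Complex.I * r * ((Complex.I * (starRingEnd ℂ) (s j)).re : ℝ) * g s) ∂Γ)
      = Psi Γ r (fun s => Complex.I * r * s j * g s) θ := by
  have i1 := integrable_psi (good_scalar hbd hg r 1 (by norm_num) j) r θ
  have i2 := integrable_psi (good_scalar hbd hg r Complex.I (by simp) j) r θ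
  rw [← integral_const_mul, ← integral_add i1 (i2.const_mul _)]
  refine integral_congr_ae (Filter.Eventually.of_forall fun s => ?_)
  simp only []
  have ha : ((1:ℂ) * (starRingEnd ℂ) (s j)).re = (s j).re := by simp
  have hb : (Complex.I * (starRingEnd ℂ) (s j)).re = (s j).im := by
    simp [Complex.mul_re]
  rw [ha, hb]
  have hsj : (s j) = ((s j).re : ℂ) + ((s j).im : ℂ) * Complex.I := (Complex.re_add_im (s j)).symm
  conv_rhs => rw [hsj]
  ring

lemma dop_psi_pair (hbd : ∀ᵐ s ∂Γ, ∀ j, ‖s j‖ ≤ 1)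
    {g h : (Fin d → ℂ) → ℂ} (hg : Good Γ g) (hh : Good Γ h) (j : Fin d) (θ : Fin d → ℂ) :
    Dop j (fun θ' => (Psi Γ 1 g θ' + Psi Γ (-1) h θ') / 2) θ
      = (Psi Γ 1 (fun s => Complex.I * (1:ℝ) * s j * g s) θ
        + Psi Γ (-1) (fun s => Complex.I * (-1:ℝ) * s j * h s) θ) / 2 := by
  have A1 := hasDerivAt_psi hbd hg 1 θ j 1 (by norm_num)
  have A2 := hasDerivAt_psi hbd hg 1 θ j Complex.I (by simp)
  have B1 := hasDerivAt_psi hbd hh (-1) θ j 1 (by norm_num)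
  have B2 := hasDerivAt_psi hbd hh (-1) θ j Complex.I (by simp)
  have hD1 : HasDerivAt (fun t : ℝ =>
      (Psi Γ 1 g (Function.update θ j (θ j + ↑t)) + Psi Γ (-1) h (Function.update θ j (θ j + ↑t))) / 2)
      ((∫ s, Complex.exp (Complex.I * (1:ℝ) * uu θ s)
        * (Complex.I * (1:ℝ) * (((1:ℂ) * (starRingEnd ℂ) (s j)).re : ℝ) * g s) ∂Γ
       + ∫ s, Complex.exp (Complex.I * (-1:ℝ) * uu θ s)
        * (Complex.I * (-1:ℝ) * (((1:ℂ) * (starRingEnd ℂ) (s j)).re : ℝ) * h s) ∂Γ) / 2) 0 := by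
    have := (A1.2.add B1.2).div_const 2
    simpa using this
  have hD2 : HasDerivAt (fun t : ℝ =>
      (Psi Γ 1 g (Function.update θ j (θ j + ↑t * Complex.I))
        + Psi Γ (-1) h (Function.update θ j (θ j + ↑t * Complex.I))) / 2)
      ((∫ s, Complex.exp (Complex.I * (1:ℝ) * uu θ s)
        * (Complex.I * (1:ℝ) * ((Complex.I * (starRingEnd ℂ) (s j)).re : ℝ) * g s) ∂Γ
       + ∫ s, Complex.exp (Complex.I * (-1:ℝ) * uu θ s)
        * (Complex.I * (-1:ℝ) * ((Complex.I * (starRingEnd ℂ) (s j)).re : ℝ) * h s) ∂Γ) / 2) 0 :=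
    (A2.2.add B2.2).div_const 2
  unfold Dop
  rw [hD1.deriv, hD2.deriv]
  rw [← delta_combine hbd hg 1 θ j, ← delta_combine hbd hh (-1) θ j]
  push_cast
  ring


lemma phi_decomp (φ : (Fin d → ℂ) → ℝ)
    (hφ : ∀ θ, φ θ = ∫ s, Real.cos ((∑ j, θ j * (starRingEnd ℂ) (s j)).re) ∂Γ) :
    (fun θ' => ((φ θ' : ℝ) : ℂ))
      = fun θ' => (Psi Γ 1 (fun _ => (1:ℂ)) θ' + Psi Γ (-1) (fun _ => (1:ℂ)) θ') / 2 := by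
  funext θ'
  rw [hφ θ']
  have i1 := integrable_psi (good_const Γ) 1 θ'
  have i2 := integrable_psi (good_const Γ) (-1) θ'
  unfold Psi
  rw [← integral_add i1 i2, ← integral_div]
  rw [show (∫ s, Real.cos ((∑ j, θ' j * (starRingEnd ℂ) (s j)).re) ∂Γ)
      = ∫ s, Real.cos (uu θ' s) ∂Γ from rfl]
  have hoi : (∫ s, ((Real.cos (uu θ' s) : ℝ) : ℂ) ∂Γ)
      = ((∫ s, Real.cos (uu θ' s) ∂Γ : ℝ) : ℂ) := integral_ofReal
  rw [← hoi]
  refine integral_congr_ae (Filter.Eventually.of_forall fun s => ?_)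
  simp only []
  rw [Complex.ofReal_cos, Complex.cos]
  rw [show Complex.I * ((1:ℝ):ℂ) * ((uu θ' s : ℝ):ℂ) = ((uu θ' s : ℝ):ℂ) * Complex.I by
    push_cast; ring]
  rw [show Complex.I * ((-1:ℝ):ℂ) * ((uu θ' s : ℝ):ℂ) = -((uu θ' s : ℝ):ℂ) * Complex.I by
    push_cast; ring]
  ring

lemma dop3 (hbd : ∀ᵐ s ∂Γ, ∀ j, ‖s j‖ ≤ 1) (i j k : Fin d) (θ : Fin d → ℂ) :
    Dop i (Dop j (Dop k
        (fun θ' => (Psi Γ 1 (fun _ => (1:ℂ)) θ' + Psi Γ (-1) (fun _ => (1:ℂ)) θ') / 2))) θ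
      = (-Complex.I * Psi Γ 1 (fun s => s i * s j * s k) θ
          + Complex.I * Psi Γ (-1) (fun s => s i * s j * s k) θ) / 2 := by
  have hI3 : Complex.I ^ 3 = -Complex.I := by
    rw [pow_succ, Complex.I_sq]; ring
  have g0 := good_const Γ
  have g1 := good_mul_coord hbd g0 (Complex.I * ((1:ℝ):ℂ)) k
  have h1 := good_mul_coord hbd g0 (Complex.I * ((-1:ℝ):ℂ)) k
  have g2 := good_mul_coord hbd g1 (Complex.I * ((1:ℝ):ℂ)) j
  have h2 := good_mul_coord hbd h1 (Complex.I * ((-1:ℝ):ℂ)) j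
  have e1 := funext (dop_psi_pair hbd g0 g0 k)
  rw [e1]
  have e2 := funext (dop_psi_pair hbd g1 h1 j)
  rw [e2]
  rw [dop_psi_pair hbd g2 h2 i θ]
  have eg : Psi Γ 1 (fun s => Complex.I * ((1:ℝ):ℂ) * s i
      * ((fun s => Complex.I * ((1:ℝ):ℂ) * s j * ((fun s => Complex.I * ((1:ℝ):ℂ) * s k
        * ((fun _ => (1:ℂ)) s)) s)) s)) θ
      = Psi Γ 1 (fun s => -Complex.I * (s i * s j * s k)) θ := by
    refine psi_congr (fun s => ?_) 1 θ
    simp only []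
    push_cast
    linear_combination (s i * s j * s k) * hI3
  have eh : Psi Γ (-1) (fun s => Complex.I * ((-1:ℝ):ℂ) * s i
      * ((fun s => Complex.I * ((-1:ℝ):ℂ) * s j * ((fun s => Complex.I * ((-1:ℝ):ℂ) * s k
        * ((fun _ => (1:ℂ)) s)) s)) s)) θ
      = Psi Γ (-1) (fun s => Complex.I * (s i * s j * s k)) θ := by
    refine psi_congr (fun s => ?_) (-1) θ
    simp only []
    push_cast
    linear_combination (-(s i * s j * s k)) * hI3
  rw [eg, eh, psi_const_mul, psi_const_mul]

lemma psi_neg_sym (hsym : Γ.map (fun s => -s) = Γ) {w : (Fin d → ℂ) → ℂ}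
    (hwm : Measurable w) (hodd : ∀ s, w (-s) = -w s) (θ : Fin d → ℂ) :
    Psi Γ (-1) w θ = -Psi Γ 1 w θ := by
  have hmeas : ∀ r : ℝ, Measurable fun s : Fin d → ℂ =>
      Complex.exp (Complex.I * r * uu θ s) * w s := fun r =>
    (Complex.measurable_exp.comp (measurable_const.mul
      (Complex.measurable_ofReal.comp (continuous_uu θ).measurable))).mul hwm
  unfold Psi
  calc ∫ s, Complex.exp (Complex.I * ((-1:ℝ):ℂ) * uu θ s) * w s ∂Γ
      = ∫ s, Complex.exp (Complex.I * ((-1:ℝ):ℂ) * uu θ s) * w s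
          ∂(Γ.map (fun s => -s)) := by rw [hsym]
    _ = ∫ s, Complex.exp (Complex.I * ((-1:ℝ):ℂ) * uu θ (-s)) * w (-s) ∂Γ := by
        rw [integral_map measurable_neg.aemeasurable]
        rw [hsym]
        exact (hmeas (-1)).aestronglyMeasurable
    _ = ∫ s, -(Complex.exp (Complex.I * ((1:ℝ):ℂ) * uu θ s) * w s) ∂Γ := by
        refine integral_congr_ae (Filter.Eventually.of_forall fun s => ?_)
        simp only []
        rw [uu_neg_right, hodd]
        rw [show Complex.I * ((-1:ℝ):ℂ) * ((-(uu θ s) : ℝ) : ℂ)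
          = Complex.I * ((1:ℝ):ℂ) * ((uu θ s : ℝ) : ℂ) by push_cast; ring]
        ring
    _ = -∫ s, Complex.exp (Complex.I * ((1:ℝ):ℂ) * uu θ s) * w s ∂Γ := integral_neg _

lemma psi_triple_zero (hbd : ∀ᵐ s ∂Γ, ∀ j, ‖s j‖ ≤ 1)
    (hsym : Γ.map (fun s => -s) = Γ)
    (φ : (Fin d → ℂ) → ℝ)
    (hφ : ∀ θ, φ θ = ∫ s, Real.cos ((∑ j, θ j * (starRingEnd ℂ) (s j)).re) ∂Γ)
    (i j k : Fin d)
    (hv : ∀ θ, Dop i (Dop j (Dop k (fun θ' => ((φ θ' : ℝ) : ℂ)))) θ = 0)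
    (θ : Fin d → ℂ) :
    Psi Γ 1 (fun s => s i * s j * s k) θ = 0 := by
  have h0 := hv θ
  rw [phi_decomp φ hφ] at h0
  rw [dop3 hbd i j k θ] at h0
  have hodd : ∀ s : Fin d → ℂ, (fun s : Fin d → ℂ => s i * s j * s k) (-s)
      = -((fun s : Fin d → ℂ => s i * s j * s k) s) := fun s => by
    simp only [Pi.neg_apply]; ring
  have hwm : Measurable fun s : Fin d → ℂ => s i * s j * s k :=
    ((measurable_pi_apply i).mul (measurable_pi_apply j)).mul (measurable_pi_apply k)
  rw [psi_neg_sym hsym hwm hodd θ] at h0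
  have h1 : (-(2:ℂ) * Complex.I) * Psi Γ 1 (fun s => s i * s j * s k) θ = 0 := by
    linear_combination 2 * h0
  rcases mul_eq_zero.1 h1 with h | h
  · exfalso
    have : (Complex.I : ℂ) ≠ 0 := Complex.I_ne_zero
    simp at h
  · exact h


lemma sw_vanish (hsupp : Γ {s : Fin d → ℂ | ∑ j, ‖s j‖ ^ 2 = 1}ᶜ = 0)
    {w : (Fin d → ℂ) → ℂ} (hw : Continuous w)
    (h0 : ∀ θ, Psi Γ 1 w θ = 0) : w =ᵐ[Γ] 0 := by
  classical
  set K : Set (Fin d → ℂ) := {s : Fin d → ℂ | ∑ j, ‖s j‖ ^ 2 = 1} with hKdef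
  have hKcont : Continuous fun s : Fin d → ℂ => ∑ j, ‖s j‖ ^ 2 :=
    continuous_finset_sum _ fun j _ => (continuous_norm.comp (continuous_apply j)).pow 2
  have hKc : IsClosed K := isClosed_eq hKcont continuous_const
  have hKm : MeasurableSet K := hKc.measurableSet
  have haeK : ∀ᵐ s ∂Γ, s ∈ K := by
    rw [MeasureTheory.ae_iff]
    exact hsupp
  have hb1 : ∀ s ∈ K, ∀ j, ‖s j‖ ≤ 1 := by
    intro s hs j
    have h1 : ‖s j‖ ^ 2 ≤ 1 := by
      rw [← hs]
      exact Finset.single_le_sum (f := fun j => ‖s j‖ ^ 2)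
        (fun i _ => by positivity) (Finset.mem_univ j)
    nlinarith [norm_nonneg (s j)]
  have hKb : Bornology.IsBounded K := by
    rw [Metric.isBounded_iff_subset_closedBall 0]
    refine ⟨1, fun s hs => ?_⟩
    rw [Metric.mem_closedBall, dist_zero_right]
    rw [pi_norm_le_iff_of_nonneg zero_le_one]
    intro j
    simpa using hb1 s hs j
  have hKcpt : IsCompact K := Metric.isCompact_of_isClosed_isBounded hKc hKb
  haveI : CompactSpace K := isCompact_iff_compactSpace.mp hKcpt
  -- characters
  have hcont : ∀ θ : Fin d → ℂ, Continuous fun x : K =>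
      Complex.exp (Complex.I * ((1:ℝ):ℂ) * uu θ (x : Fin d → ℂ)) := fun θ =>
    Complex.continuous_exp.comp (continuous_const.mul
      (Complex.continuous_ofReal.comp ((continuous_uu θ).comp continuous_subtype_val)))
  set chK : (Fin d → ℂ) → C(K, ℂ) := fun θ => ⟨_, hcont θ⟩ with hchK
  set S : Set C(K, ℂ) := Set.range chK with hS
  set V : Submodule ℂ C(K, ℂ) := Submodule.span ℂ S with hV
  have hchK_mul : ∀ θ θ' : Fin d → ℂ, chK θ * chK θ' = chK (θ + θ') := by
    intro θ θ'
    ext x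
    simp only [hchK, ContinuousMap.mul_apply, ContinuousMap.coe_mk]
    rw [← Complex.exp_add]
    congr 1
    rw [uu_add_left]
    push_cast
    ring
  have hchK_one : chK 0 = 1 := by
    ext x
    simp [hchK, uu_zero_left]
  have hchK_star : ∀ θ : Fin d → ℂ, star (chK θ) = chK (-θ) := by
    intro θ
    ext x
    simp only [hchK, ContinuousMap.star_apply, ContinuousMap.coe_mk]
    rw [show (star (Complex.exp (Complex.I * ((1:ℝ):ℂ) * uu θ (x : Fin d → ℂ))) : ℂ)
        = (starRingEnd ℂ) (Complex.exp (Complex.I * ((1:ℝ):ℂ) * uu θ (x : Fin d → ℂ))) from rfl]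
    rw [← Complex.exp_conj]
    congr 1
    rw [uu_neg_left]
    simp [Complex.conj_I, Complex.conj_ofReal]
  have hVmul : ∀ a ∈ V, ∀ b ∈ V, a * b ∈ V := by
    have hSS : S * S ⊆ S := by
      rintro x ⟨a, ha, b, hb, rfl⟩
      obtain ⟨θ, rfl⟩ := ha
      obtain ⟨θ', rfl⟩ := hb
      exact ⟨θ + θ', (hchK_mul θ θ').symm⟩
    intro a ha b hb
    have h1 : a * b ∈ V * V := Submodule.mul_mem_mul ha hb
    have h2 : V * V ≤ V := by
      rw [hV, Submodule.span_mul_span]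
      exact Submodule.span_le.2 fun x hx => Submodule.subset_span (hSS hx)
    exact h2 h1
  have honeV : (1 : C(K, ℂ)) ∈ V := Submodule.subset_span (hchK_one ▸ ⟨0, rfl⟩)
  have hstarV : ∀ a ∈ V, star a ∈ V := by
    intro a ha
    refine Submodule.span_induction ?_ ?_ ?_ ?_ ha
    · rintro x ⟨θ, rfl⟩
      rw [hchK_star θ]
      exact Submodule.subset_span ⟨-θ, rfl⟩
    · simpa using V.zero_mem
    · intro x y _ _ hx hy
      rw [star_add]
      exact V.add_mem hx hy
    · intro c x _ hx
      rw [star_smul]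
      exact V.smul_mem _ hx
  set A : StarSubalgebra ℂ C(K, ℂ) :=
    { carrier := V
      mul_mem' := fun {a b} ha hb => hVmul a ha b hb
      one_mem' := honeV
      add_mem' := fun {a b} ha hb => V.add_mem ha hb
      zero_mem' := V.zero_mem
      algebraMap_mem' := fun c => by
        rw [Algebra.algebraMap_eq_smul_one]
        exact V.smul_mem c honeV
      star_mem' := fun {a} ha => hstarV a ha } with hA
  have hsep : A.SeparatesPoints := by
    intro x y hxy
    have hzne : (x : Fin d → ℂ) - (y : Fin d → ℂ) ≠ 0 :=
      sub_ne_zero.2 fun h => hxy (Subtype.ext h)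
    set z : Fin d → ℂ := (x : Fin d → ℂ) - (y : Fin d → ℂ) with hz
    have ht : 0 < uu z z := uu_self_pos hzne
    set θ : Fin d → ℂ := (Real.pi / uu z z) • z with hθ
    have hdiff : uu θ (x : Fin d → ℂ) = uu θ (y : Fin d → ℂ) + Real.pi := by
      have h1 : uu θ (x : Fin d → ℂ) - uu θ (y : Fin d → ℂ) = uu θ z := (uu_sub_right _ _ _).symm
      have h2 : uu θ z = (Real.pi / uu z z) * uu z z := uu_smul_left _ _ _
      rw [div_mul_cancel₀ _ ht.ne'] at h2
      linarith [h1, h2]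
    refine ⟨⇑(chK θ), ⟨chK θ, Submodule.subset_span ⟨θ, rfl⟩, rfl⟩, ?_⟩
    simp only [hchK, ContinuousMap.coe_mk]
    intro hEq
    rw [hdiff] at hEq
    rw [show Complex.I * ((1:ℝ):ℂ) * ((uu θ (y : Fin d → ℂ) + Real.pi : ℝ) : ℂ)
        = Complex.I * ((1:ℝ):ℂ) * ((uu θ (y : Fin d → ℂ) : ℝ) : ℂ) + ↑Real.pi * Complex.I by
      push_cast; ring] at hEq
    rw [Complex.exp_add, Complex.exp_pi_mul_I] at hEq
    have hzero : Complex.exp (Complex.I * ((1:ℝ):ℂ) * ((uu θ (y : Fin d → ℂ) : ℝ) : ℂ)) = 0 := by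
      linear_combination (-1/2 : ℂ) * hEq
    exact Complex.exp_ne_zero _ hzero
  have hdense := ContinuousMap.starSubalgebra_topologicalClosure_eq_top_of_separatesPoints A hsep
  -- bound for w on K
  obtain ⟨Cw₀, hCw₀⟩ : ∃ C, ∀ x ∈ K, ‖w x‖ ≤ C :=
    hKcpt.exists_bound_of_continuousOn hw.continuousOn
  set Cw : ℝ := max Cw₀ 0 with hCwdef
  have hCw : ∀ x ∈ K, ‖w x‖ ≤ Cw := fun x hx => le_trans (hCw₀ x hx) (le_max_left _ _)
  have hCw0 : 0 ≤ Cw := le_max_right _ _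
  -- the extension-by-zero functional
  set ext0 : C(K, ℂ) → (Fin d → ℂ) → ℂ :=
    fun f => Function.extend (Subtype.val : K → Fin d → ℂ) ⇑f (fun _ => 0) with hext0
  have hext_val : ∀ (f : C(K, ℂ)) (s : Fin d → ℂ) (hs : s ∈ K), ext0 f s = f ⟨s, hs⟩ := by
    intro f s hs
    simp only [hext0]
    exact Subtype.coe_injective.extend_apply _ _ (⟨s, hs⟩ : K)
  have hext_zero : ∀ (f : C(K, ℂ)) (s : Fin d → ℂ), s ∉ K → ext0 f s = 0 := by
    intro f s hs
    simp only [hext0]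
    rw [Function.extend_apply']
    rintro ⟨a, rfl⟩
    exact hs a.2
  have hext_norm : ∀ (f : C(K, ℂ)) (s : Fin d → ℂ), ‖ext0 f s‖ ≤ ‖f‖ := by
    intro f s
    by_cases hs : s ∈ K
    · rw [hext_val f s hs]
      exact f.norm_coe_le_norm _
    · rw [hext_zero f s hs]
      simp [norm_nonneg]
  have hext_meas : ∀ f : C(K, ℂ), Measurable (ext0 f) := fun f =>
    (MeasurableEmbedding.subtype_coe hKm).measurable_extend f.continuous.measurable
      measurable_const
  have hint : ∀ f : C(K, ℂ), Integrable (fun s => ext0 f s * w s) Γ := by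
    intro f
    refine Integrable.mono' (integrable_const (‖f‖ * Cw))
      ((hext_meas f).mul hw.measurable).aestronglyMeasurable ?_
    filter_upwards [haeK] with s hs
    rw [norm_mul]
    exact mul_le_mul (hext_norm f s) (hCw s hs) (norm_nonneg _) (norm_nonneg _)
  set L : C(K, ℂ) → ℂ := fun f => ∫ s, ext0 f s * w s ∂Γ with hLdef
  have hL_S : ∀ θ : Fin d → ℂ, L (chK θ) = 0 := by
    intro θ
    have : L (chK θ) = Psi Γ 1 w θ := by
      simp only [hLdef]
      unfold Psi
      refine integral_congr_ae ?_
      filter_upwards [haeK] with s hs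
      rw [hext_val (chK θ) s hs]
      rfl
    rw [this]
    exact h0 θ
  have hL_V : ∀ f ∈ V, L f = 0 := by
    intro f hf
    refine Submodule.span_induction ?_ ?_ ?_ ?_ hf
    · rintro x ⟨θ, rfl⟩
      exact hL_S θ
    · have : ∀ s, ext0 (0 : C(K, ℂ)) s = 0 := by
        intro s
        by_cases hs : s ∈ K
        · rw [hext_val _ s hs]; rfl
        · exact hext_zero _ s hs
      simp only [hLdef]
      rw [show (∫ s, ext0 (0 : C(K,ℂ)) s * w s ∂Γ) = ∫ s, (0 : ℂ) ∂Γ from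
        integral_congr_ae (Filter.Eventually.of_forall fun s => by simp only [this s, zero_mul])]
      simp
    · intro a b _ _ ha hb
      have hadd : ∀ s, ext0 (a + b) s = ext0 a s + ext0 b s := by
        intro s
        by_cases hs : s ∈ K
        · rw [hext_val _ s hs, hext_val _ s hs, hext_val _ s hs]; rfl
        · rw [hext_zero _ s hs, hext_zero _ s hs, hext_zero _ s hs]; ring
      simp only [hLdef] at ha hb ⊢
      rw [show (∫ s, ext0 (a + b) s * w s ∂Γ)
          = ∫ s, (ext0 a s * w s + ext0 b s * w s) ∂Γ from
        integral_congr_ae (Filter.Eventually.of_forall fun s => by simp only [hadd s]; ring)]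
      rw [integral_add (hint a) (hint b), ha, hb, add_zero]
    · intro c a _ ha
      have hsmul : ∀ s, ext0 (c • a) s = c * ext0 a s := by
        intro s
        by_cases hs : s ∈ K
        · rw [hext_val _ s hs, hext_val _ s hs]; rfl
        · rw [hext_zero _ s hs, hext_zero _ s hs]; ring
      simp only [hLdef] at ha ⊢
      rw [show (∫ s, ext0 (c • a) s * w s ∂Γ) = ∫ s, c * (ext0 a s * w s) ∂Γ from
        integral_congr_ae (Filter.Eventually.of_forall fun s => by simp only [hsmul s]; ring)]
      rw [integral_const_mul, ha, mul_zero]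
  -- approximation: L vanishes everywhere
  have hL_all : ∀ f : C(K, ℂ), L f = 0 := by
    intro f
    have hmemtop : f ∈ A.topologicalClosure := by
      rw [hdense]; trivial
    have hmem : f ∈ closure (A : Set C(K, ℂ)) := hmemtop
    set M : ℝ := (Γ Set.univ).toReal with hM
    have hM0 : 0 ≤ M := ENNReal.toReal_nonneg
    have hLsub : ∀ g : C(K, ℂ), L f - L g = ∫ s, ext0 (f - g) s * w s ∂Γ := by
      intro g
      have hsub : ∀ s, ext0 (f - g) s = ext0 f s - ext0 g s := by
        intro s
        by_cases hs : s ∈ K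
        · rw [hext_val _ s hs, hext_val _ s hs, hext_val _ s hs]; rfl
        · rw [hext_zero _ s hs, hext_zero _ s hs, hext_zero _ s hs]; ring
      simp only [hLdef]
      rw [← integral_sub (hint f) (hint g)]
      refine integral_congr_ae (Filter.Eventually.of_forall fun s => ?_)
      simp only [hsub s]; ring
    have hbnd : ∀ ε > (0:ℝ), ‖L f‖ ≤ ε * (Cw * M) := by
      intro ε hε
      obtain ⟨g, hgA, hglt⟩ := Metric.mem_closure_iff.1 hmem ε hε
      have hLg : L g = 0 := hL_V g hgA
      have h1 : ‖L f‖ = ‖L f - L g‖ := by rw [hLg, sub_zero]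
      rw [h1, hLsub g]
      have h2 : ‖∫ s, ext0 (f - g) s * w s ∂Γ‖ ≤ dist f g * Cw * M := by
        refine norm_integral_le_of_norm_le_const ?_
        filter_upwards [haeK] with s hs
        rw [norm_mul]
        calc ‖ext0 (f - g) s‖ * ‖w s‖ ≤ ‖f - g‖ * Cw :=
            mul_le_mul (hext_norm _ s) (hCw s hs) (norm_nonneg _) (norm_nonneg _)
          _ = dist f g * Cw := by rw [dist_eq_norm]
      calc ‖∫ s, ext0 (f - g) s * w s ∂Γ‖ ≤ dist f g * Cw * M := h2
        _ ≤ ε * Cw * M :=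
            mul_le_mul_of_nonneg_right (mul_le_mul_of_nonneg_right hglt.le hCw0) hM0
        _ = ε * (Cw * M) := by ring
    by_contra hne
    have hpos : 0 < ‖L f‖ := norm_pos_iff.2 hne
    have hle := hbnd (‖L f‖ / (2 * (Cw * M + 1)))
      (by positivity)
    have h2 : ‖L f‖ / (2 * (Cw * M + 1)) * (Cw * M) < ‖L f‖ := by
      rw [div_mul_eq_mul_div, div_lt_iff₀ (by positivity)]
      nlinarith [mul_nonneg hpos.le (mul_nonneg hCw0 hM0), mul_nonneg hCw0 hM0]
    linarith [hle, h2]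
  -- apply to the conjugate of w
  set f₀ : C(K, ℂ) := ⟨fun x => (starRingEnd ℂ) (w (x : Fin d → ℂ)),
    Complex.continuous_conj.comp (hw.comp continuous_subtype_val)⟩ with hf₀
  have hL0 := hL_all f₀
  have h1 : ∫ s, ((Complex.normSq (w s) : ℝ) : ℂ) ∂Γ = 0 := by
    rw [← hL0]
    simp only [hLdef]
    refine integral_congr_ae ?_
    filter_upwards [haeK] with s hs
    rw [hext_val f₀ s hs]
    simp only [hf₀, ContinuousMap.coe_mk]
    rw [Complex.normSq_eq_conj_mul_self]
  have hoi : (∫ s, ((Complex.normSq (w s) : ℝ) : ℂ) ∂Γ)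
      = ((∫ s, Complex.normSq (w s) ∂Γ : ℝ) : ℂ) := integral_ofReal
  rw [hoi, Complex.ofReal_eq_zero] at h1
  have hintsq : Integrable (fun s => Complex.normSq (w s)) Γ := by
    refine Integrable.mono' (integrable_const (Cw ^ 2))
      ((Complex.continuous_normSq.comp hw).measurable).aestronglyMeasurable ?_
    filter_upwards [haeK] with s hs
    rw [Real.norm_eq_abs, abs_of_nonneg (Complex.normSq_nonneg _)]
    have : Complex.normSq (w s) = ‖w s‖ ^ 2 := by
      rw [Complex.normSq_eq_norm_sq]
    rw [this]
    exact pow_le_pow_left₀ (norm_nonneg _) (hCw s hs) 2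
  have h2 : (fun s => Complex.normSq (w s)) =ᵐ[Γ] 0 :=
    (integral_eq_zero_iff_of_nonneg
      (fun s => Complex.normSq_nonneg (w s)) hintsq).1 h1
  filter_upwards [h2] with s hs
  simpa [Complex.normSq_eq_zero] using hs

end Psi

lemma measurable_cspow (β : ℝ) : Measurable fun z : ℂ => cspow z β := by
  unfold cspow
  refine measurable_of_continuousOn_compl_singleton 0 ?_
  intro z hz
  have hz' : z ≠ 0 := by simpa using hz
  have hz0 : ‖z‖ ≠ 0 := norm_ne_zero_iff.mpr hz'
  have h1 : ContinuousAt (fun z : ℂ => (‖z‖ ^ (β - 1) : ℝ)) z :=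
    (Real.continuousAt_rpow_const _ _ (Or.inl hz0)).comp continuous_norm.continuousAt
  refine ContinuousAt.continuousWithinAt ?_
  exact (Complex.continuous_ofReal.continuousAt.comp h1).mul
    Complex.continuous_conj.continuousAt

lemma cspow_zero' (β : ℝ) : cspow 0 β = 0 := by simp [cspow]

lemma norm_cspow_le {β : ℝ} (hβ : 0 < β) (c z : ℂ) (hz : ‖z‖ ≤ ‖c‖) :
    ‖cspow z β‖ ≤ ‖c‖ ^ β := by
  by_cases h : z = 0
  · rw [h, cspow_zero']
    simp only [norm_zero]
    positivity
  · have hpos : 0 < ‖z‖ := norm_pos_iff.mpr h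
    have h1 : ‖cspow z β‖ = ‖z‖ ^ (β - 1) * ‖z‖ := by
      unfold cspow
      rw [norm_mul, Complex.norm_real, Real.norm_eq_abs,
        Complex.norm_conj, abs_of_nonneg (Real.rpow_nonneg hpos.le _)]
    rw [h1]
    have h2 : ‖z‖ ^ (β - 1) * ‖z‖ = ‖z‖ ^ β := by
      nth_rewrite 2 [show ‖z‖ = ‖z‖ ^ (1:ℝ) from (Real.rpow_one _).symm]
      rw [← Real.rpow_add hpos]
      norm_num
    rw [h2]
    exact Real.rpow_le_rpow hpos.le hz hβ.le

lemma pointwise_key (α : ℝ) (i₀ : Fin d) (θ s : Fin d → ℂ)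
    (hs : ∀ i k : Fin d, i ≠ k → s i = 0 ∨ s k = 0) :
    s i₀ * cspow (∑ j, θ j * s j) (α - 1) = ∑ j, s i₀ * cspow (θ j * s j) (α - 1) := by
  by_cases hall : ∀ j, s j = 0
  · have h0 : ∀ j : Fin d, θ j * s j = 0 := fun j => by rw [hall j, mul_zero]
    have hsum : ∑ j, θ j * s j = 0 := by simp [h0]
    rw [hsum, cspow_zero', mul_zero]
    symm
    refine Finset.sum_eq_zero fun j _ => ?_
    rw [h0 j, cspow_zero', mul_zero]
  · push_neg at hall
    obtain ⟨m, hm⟩ := hall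
    have hz : ∀ j : Fin d, j ≠ m → s j = 0 := by
      intro j hj
      rcases hs j m hj with h | h
      · exact h
      · exact absurd h hm
    have hsum : ∑ j, θ j * s j = θ m * s m :=
      Finset.sum_eq_single m (fun j _ hj => by rw [hz j hj, mul_zero])
        (fun h => absurd (Finset.mem_univ m) h)
    rw [hsum]
    symm
    refine Finset.sum_eq_single m (fun j _ hj => ?_) (fun h => absurd (Finset.mem_univ m) h)
    rw [hz j hj, mul_zero, cspow_zero', mul_zero]

end Stmt1Aux

open Stmt1Aux in
theorem stmt1 (d : ℕ) (hd : 2 ≤ d) (α : ℝ) (hα1 : 1 < α) (hα2 : α < 2)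
    (Γ : Measure (Fin d → ℂ)) [IsFiniteMeasure Γ]
    (hsupp : Γ {s : Fin d → ℂ | ∑ j, ‖s j‖ ^ 2 = 1}ᶜ = 0)
    (hsym : Γ.map (fun s => -s) = Γ)
    (φ : (Fin d → ℂ) → ℝ)
    (hφ : ∀ θ, φ θ = ∫ s, Real.cos ((∑ j, θ j * (starRingEnd ℂ) (s j)).re) ∂Γ)
    (hvanish : ∀ i j k : Fin d, ¬(i = j ∧ j = k) →
      ∀ θ, Dop i (Dop j (Dop k (fun θ' => ((φ θ' : ℝ) : ℂ)))) θ = 0) :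
    ∀ (i₀ : Fin d) (θ : Fin d → ℂ),
      ∫ s, s i₀ * cspow (∑ j, θ j * s j) (α - 1) ∂Γ
        = ∑ j, ∫ s, s i₀ * cspow (θ j * s j) (α - 1) ∂Γ := by
  have haeK : ∀ᵐ s ∂Γ, s ∈ {s : Fin d → ℂ | ∑ j, ‖s j‖ ^ 2 = 1} := by
    rw [MeasureTheory.ae_iff]
    exact hsupp
  have hbd : ∀ᵐ s ∂Γ, ∀ j, ‖s j‖ ≤ 1 := by
    filter_upwards [haeK] with s hs j
    have h1 : ‖s j‖ ^ 2 ≤ 1 := by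
      rw [← hs]
      exact Finset.single_le_sum (f := fun j => ‖s j‖ ^ 2)
        (fun i _ => by positivity) (Finset.mem_univ j)
    nlinarith [norm_nonneg (s j)]
  have hae2 : ∀ᵐ s ∂Γ, ∀ i k : Fin d, i ≠ k → s i = 0 ∨ s k = 0 := by
    rw [MeasureTheory.ae_all_iff]
    intro i
    rw [MeasureTheory.ae_all_iff]
    intro k
    by_cases hik : i = k
    · exact Filter.Eventually.of_forall fun s h => absurd hik h
    · have h00 := psi_triple_zero hbd hsym φ hφ i i k
        (hvanish i i k (fun ⟨_, h⟩ => hik h))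
      have hw0 : (fun s : Fin d → ℂ => s i * s i * s k) =ᵐ[Γ] 0 :=
        sw_vanish hsupp
          (((continuous_apply i).mul (continuous_apply i)).mul (continuous_apply k)) h00
      filter_upwards [hw0] with s hs _
      have hs' : s i * s i * s k = 0 := hs
      rcases mul_eq_zero.1 hs' with h | h
      · left; exact mul_self_eq_zero.1 h
      · right; exact h
  intro i₀ θ
  have hβ : (0:ℝ) < α - 1 := by linarith
  have hterm_int : ∀ j : Fin d, Integrable (fun s => s i₀ * cspow (θ j * s j) (α - 1)) Γ := by
    intro j
    refine Integrable.mono' (integrable_const (‖θ j‖ ^ (α - 1)))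
      ((measurable_pi_apply i₀).mul
        ((measurable_cspow (α - 1)).comp (measurable_const.mul (measurable_pi_apply j)))
        ).aestronglyMeasurable ?_
    filter_upwards [hbd] with s hs
    rw [norm_mul]
    have h1 : ‖s i₀‖ ≤ 1 := by simpa using hs i₀
    have h2 : ‖cspow (θ j * s j) (α - 1)‖ ≤ ‖θ j‖ ^ (α - 1) := by
      refine norm_cspow_le hβ (θ j) _ ?_
      rw [norm_mul]
      calc ‖θ j‖ * ‖s j‖ ≤ ‖θ j‖ * 1 :=
          mul_le_mul_of_nonneg_left (hs j) (norm_nonneg _)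
        _ = ‖θ j‖ := mul_one _
    calc ‖s i₀‖ * ‖cspow (θ j * s j) (α - 1)‖ ≤ 1 * (‖θ j‖ ^ (α - 1)) :=
        mul_le_mul h1 h2 (norm_nonneg _) zero_le_one
      _ = ‖θ j‖ ^ (α - 1) := one_mul _
  have hcongr : ∫ s, s i₀ * cspow (∑ j, θ j * s j) (α - 1) ∂Γ
      = ∫ s, (∑ j, s i₀ * cspow (θ j * s j) (α - 1)) ∂Γ := by
    refine integral_congr_ae ?_
    filter_upwards [hae2] with s hs
    exact pointwise_key α i₀ θ s hs
  rw [hcongr, integral_finset_sum _ fun j _ => hterm_int j]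
end

section
/- Let 1 < p < 2. Then ∫_ℝ ∫_ℝ (1 − cos(x + y))/(x² + y²)^{(p+2)/2} dx dy = (Γ(1−p) · cos(pπ/2)/p) · ∫_0^{2π} (1 + sin(2θ))^{p/2} dθ. -/
open MeasureTheory Real Set Filter

lemma aux_cos_sq (x : ℝ) : 1 - Real.cos x ≤ x ^ 2 := by
  have := Real.one_sub_sq_div_two_le_cos (x := x); nlinarith [sq_nonneg x]

lemma aux_cos_nonneg (x : ℝ) : 0 ≤ 1 - Real.cos x := by nlinarith [Real.cos_le_one x]

lemma aux_cos_two (x : ℝ) : 1 - Real.cos x ≤ 2 := by nlinarith [Real.neg_one_le_cos x]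

/-- Integrability of the key kernel. -/
lemma hK_int (p : ℝ) (hp1 : 1 < p) (hp2 : p < 2) :
    IntegrableOn (fun r => (1 - Real.cos r) * r ^ (-(p + 1))) (Ioi (0 : ℝ)) := by
  have hmeas : ∀ s : Set ℝ, s ⊆ Ioi 0 → MeasurableSet s →
      AEStronglyMeasurable (fun r : ℝ => (1 - Real.cos r) * r ^ (-(p + 1)))
        (volume.restrict s) := by
    intro s hs hsm
    refine ContinuousOn.aestronglyMeasurable ?_ hsm
    refine ContinuousOn.mul (by fun_prop) ?_
    intro x hx
    exact (Real.continuousAt_rpow_const x _ (Or.inl (ne_of_gt (hs hx)))).continuousWithinAt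
  have h1 : IntegrableOn (fun r => (1 - Real.cos r) * r ^ (-(p + 1))) (Ioc (0 : ℝ) 1) := by
    have hbound : IntegrableOn (fun r : ℝ => r ^ (1 - p)) (Ioc (0 : ℝ) 1) := by
      have := intervalIntegral.intervalIntegrable_rpow' (a := 0) (b := 1) (r := 1 - p)
        (by linarith)
      rwa [intervalIntegrable_iff_integrableOn_Ioc_of_le zero_le_one] at this
    refine Integrable.mono hbound (hmeas _ (fun x hx => hx.1) measurableSet_Ioc) ?_
    filter_upwards [ae_restrict_mem measurableSet_Ioc] with r hr
    have hr0 : 0 < r := hr.1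
    have h2 : (1 - Real.cos r) * r ^ (-(p + 1)) ≤ r ^ (1 - p) := by
      calc (1 - Real.cos r) * r ^ (-(p + 1)) ≤ r ^ 2 * r ^ (-(p + 1)) := by
            exact mul_le_mul_of_nonneg_right (aux_cos_sq r) (Real.rpow_nonneg hr0.le _)
        _ = r ^ (1 - p) := by
            rw [← Real.rpow_natCast r 2, ← Real.rpow_add hr0]; congr 1; ring
    have h3 : 0 ≤ (1 - Real.cos r) * r ^ (-(p + 1)) :=
      mul_nonneg (aux_cos_nonneg r) (Real.rpow_nonneg hr0.le _)
    rw [Real.norm_eq_abs, Real.norm_eq_abs, abs_of_nonneg h3,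
      abs_of_nonneg (Real.rpow_nonneg hr0.le _)]
    exact h2
  have h2 : IntegrableOn (fun r => (1 - Real.cos r) * r ^ (-(p + 1))) (Ioi (1 : ℝ)) := by
    have hbound : IntegrableOn (fun r : ℝ => 2 * r ^ (-(p + 1))) (Ioi (1 : ℝ)) :=
      (integrableOn_Ioi_rpow_of_lt (by linarith) one_pos).const_mul 2
    refine Integrable.mono hbound (hmeas _ (fun x hx => mem_Ioi.2 (lt_trans one_pos (mem_Ioi.1 hx))) measurableSet_Ioi) ?_
    filter_upwards [ae_restrict_mem measurableSet_Ioi] with r hr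
    have hr0 : (0 : ℝ) < r := lt_trans one_pos hr
    have h3 : 0 ≤ (1 - Real.cos r) * r ^ (-(p + 1)) :=
      mul_nonneg (aux_cos_nonneg r) (Real.rpow_nonneg hr0.le _)
    rw [Real.norm_eq_abs, Real.norm_eq_abs, abs_of_nonneg h3, abs_of_nonneg (by positivity)]
    exact mul_le_mul_of_nonneg_right (aux_cos_two r) (Real.rpow_nonneg hr0.le _)
  have := h1.union h2
  rwa [Set.Ioc_union_Ioi_eq_Ioi zero_le_one] at this

/-- Integrability of `t ^ (p-1) / (1 + t^2)` on `(0, ∞)`. -/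
lemma hJ_int (p : ℝ) (hp1 : 1 < p) (hp2 : p < 2) :
    IntegrableOn (fun t : ℝ => t ^ (p - 1) / (1 + t ^ 2)) (Ioi (0 : ℝ)) := by
  have hmeas : ∀ s : Set ℝ, s ⊆ Ioi 0 → MeasurableSet s →
      AEStronglyMeasurable (fun t : ℝ => t ^ (p - 1) / (1 + t ^ 2))
        (volume.restrict s) := by
    intro s hs hsm
    refine ContinuousOn.aestronglyMeasurable ?_ hsm
    refine ContinuousOn.div ?_ (by fun_prop) (fun x _ => by positivity)
    intro x hx
    exact (Real.continuousAt_rpow_const x _ (Or.inl (ne_of_gt (hs hx)))).continuousWithinAt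
  have h1 : IntegrableOn (fun t : ℝ => t ^ (p - 1) / (1 + t ^ 2)) (Ioc (0 : ℝ) 1) := by
    have hbound : IntegrableOn (fun t : ℝ => t ^ (p - 1)) (Ioc (0 : ℝ) 1) := by
      have := intervalIntegral.intervalIntegrable_rpow' (a := 0) (b := 1) (r := p - 1)
        (by linarith)
      rwa [intervalIntegrable_iff_integrableOn_Ioc_of_le zero_le_one] at this
    refine Integrable.mono hbound (hmeas _ (fun x hx => hx.1) measurableSet_Ioc) ?_
    filter_upwards [ae_restrict_mem measurableSet_Ioc] with t ht
    have ht0 : 0 < t := ht.1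
    rw [Real.norm_eq_abs, Real.norm_eq_abs, abs_of_nonneg (by positivity),
      abs_of_nonneg (Real.rpow_nonneg ht0.le _)]
    rw [div_le_iff₀ (by positivity)]
    nlinarith [Real.rpow_nonneg ht0.le (p - 1), sq_nonneg t]
  have h2 : IntegrableOn (fun t : ℝ => t ^ (p - 1) / (1 + t ^ 2)) (Ioi (1 : ℝ)) := by
    have hbound : IntegrableOn (fun t : ℝ => t ^ (p - 3)) (Ioi (1 : ℝ)) :=
      integrableOn_Ioi_rpow_of_lt (by linarith) one_pos
    refine Integrable.mono hbound (hmeas _ (fun x hx => mem_Ioi.2 (lt_trans one_pos (mem_Ioi.1 hx))) measurableSet_Ioi) ?_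
    filter_upwards [ae_restrict_mem measurableSet_Ioi] with t ht
    have ht0 : (0 : ℝ) < t := lt_trans one_pos ht
    rw [Real.norm_eq_abs, Real.norm_eq_abs, abs_of_nonneg (by positivity),
      abs_of_nonneg (Real.rpow_nonneg ht0.le _)]
    rw [div_le_iff₀ (by positivity)]
    have : t ^ (p - 3) * t ^ 2 = t ^ (p - 1) := by
      rw [← Real.rpow_natCast t 2, ← Real.rpow_add ht0]; congr 1; ring
    nlinarith [Real.rpow_nonneg ht0.le (p - 3)]
  have := h1.union h2
  rwa [Set.Ioc_union_Ioi_eq_Ioi zero_le_one] at this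

lemma int_exp_rate (c : ℝ) (hc : 0 < c) :
    ∫ r in Ioi (0 : ℝ), Real.exp (-(c * r)) = 1 / c := by
  have h := Real.integral_rpow_mul_exp_neg_mul_Ioi (a := 1) (r := c) one_pos hc
  simpa [Real.Gamma_one] using h

lemma exp_rate_integrable (c : ℝ) (hc : 0 < c) :
    IntegrableOn (fun r : ℝ => Real.exp (-(c * r))) (Ioi (0 : ℝ)) := by
  simpa [neg_mul] using exp_neg_integrableOn_Ioi 0 hc

lemma gamma_rate_integrable (a c : ℝ) (ha : 0 < a) (hc : 0 < c) :
    IntegrableOn (fun t : ℝ => t ^ (a - 1) * Real.exp (-(c * t))) (Ioi (0 : ℝ)) := by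
  have h0 := Real.GammaIntegral_convergent ha
  have h1 : IntegrableOn (fun t : ℝ => Real.exp (-(c * t)) * (c * t) ^ (a - 1)) (Ioi 0) := by
    have := (integrableOn_Ioi_comp_mul_left_iff
      (fun x : ℝ => Real.exp (-x) * x ^ (a - 1)) 0 hc).2
    simpa using this (by simpa using h0)
  have h2 := h1.const_mul (c ^ (1 - a))
  refine IntegrableOn.congr_fun h2 ?_ measurableSet_Ioi
  intro t ht
  have ht0 : (0 : ℝ) < t := ht
  have hcx : (c * t) ^ (a - 1) = c ^ (a - 1) * t ^ (a - 1) := Real.mul_rpow hc.le ht0.le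
  dsimp only
  rw [hcx]
  have hcc : c ^ (1 - a) * c ^ (a - 1) = 1 := by
    rw [← Real.rpow_add hc]; norm_num
  calc c ^ (1 - a) * (Real.exp (-(c * t)) * (c ^ (a - 1) * t ^ (a - 1)))
      = (c ^ (1 - a) * c ^ (a - 1)) * (t ^ (a - 1) * Real.exp (-(c * t))) := by ring
    _ = t ^ (a - 1) * Real.exp (-(c * t)) := by rw [hcc, one_mul]

lemma exp_cos_integrable (c : ℝ) (hc : 0 < c) :
    IntegrableOn (fun r : ℝ => Real.exp (-(c * r)) * Real.cos r) (Ioi (0 : ℝ)) := by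
  refine Integrable.mono (exp_rate_integrable c hc) ?_ ?_
  · exact (Continuous.aestronglyMeasurable (by fun_prop))
  · refine Eventually.of_forall fun r => ?_
    rw [norm_mul, Real.norm_eq_abs, Real.abs_exp]
    calc Real.exp (-(c * r)) * |Real.cos r| ≤ Real.exp (-(c * r)) * 1 := by
          gcongr; exact Real.abs_cos_le_one r
      _ = Real.exp (-(c * r)) := mul_one _

lemma int_exp_cos (c : ℝ) (hc : 0 < c) :
    ∫ r in Ioi (0 : ℝ), Real.exp (-(c * r)) * Real.cos r = c / (1 + c ^ 2) := by
  set F : ℝ → ℝ := fun r => Real.exp (-(c * r)) * (Real.sin r - c * Real.cos r) / (1 + c ^ 2)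
    with hF
  have hd : ∀ x ∈ Ioi (0 : ℝ), HasDerivAt F (Real.exp (-(c * x)) * Real.cos x) x := by
    intro x _
    have h1 : HasDerivAt (fun r : ℝ => -(c * r)) (-c) x := by
      have := ((hasDerivAt_id x).const_mul c).neg; simp only [mul_one] at this; exact this
    have h2 := (Real.hasDerivAt_exp (-(c * x))).comp x h1
    have h3 : HasDerivAt (fun r : ℝ => Real.sin r - c * Real.cos r)
        (Real.cos x - c * -Real.sin x) x :=
      (Real.hasDerivAt_sin x).sub ((Real.hasDerivAt_cos x).const_mul c)
    have h4 := (h2.mul h3).div_const (1 + c ^ 2)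
    refine h4.congr_deriv ?_
    have hne : (1 : ℝ) + c ^ 2 ≠ 0 := by positivity
    simp only [Function.comp]
    field_simp
    ring
  have ht : Tendsto F atTop (nhds 0) := by
    apply squeeze_zero_norm'
      (a := fun r : ℝ => Real.exp (-(c * r)) * ((1 + c) / (1 + c ^ 2)))
    · refine Eventually.of_forall fun r => ?_
      rw [hF]
      rw [norm_div, norm_mul, Real.norm_eq_abs, Real.norm_eq_abs, Real.norm_eq_abs,
        Real.abs_exp]
      rw [abs_of_nonneg (by positivity : (0:ℝ) ≤ 1 + c ^ 2), div_le_iff₀ (by positivity)]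
      have hb : |Real.sin r - c * Real.cos r| ≤ 1 + c := by
        calc |Real.sin r - c * Real.cos r| ≤ |Real.sin r| + |c * Real.cos r| := abs_sub _ _
          _ ≤ 1 + c := by
              rw [abs_mul, abs_of_nonneg hc.le]
              have := Real.abs_sin_le_one r
              have h2 := Real.abs_cos_le_one r
              nlinarith
      calc Real.exp (-(c * r)) * |Real.sin r - c * Real.cos r|
          ≤ Real.exp (-(c * r)) * (1 + c) := by gcongr
        _ = Real.exp (-(c * r)) * ((1 + c) / (1 + c ^ 2)) * (1 + c ^ 2) := by
            field_simp
    · have h5 : Tendsto (fun r : ℝ => -(c * r)) atTop atBot := by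
        exact tendsto_neg_atBot_iff.mpr (Tendsto.const_mul_atTop hc tendsto_id)
      have h6 : Tendsto (fun r : ℝ => Real.exp (-(c * r))) atTop (nhds 0) :=
        Real.tendsto_exp_atBot.comp h5
      simpa using h6.mul_const ((1 + c) / (1 + c ^ 2))
  have hcont : ContinuousWithinAt F (Ici 0) 0 :=
    Continuous.continuousWithinAt (by fun_prop)
  have := integral_Ioi_of_hasDerivAt_of_tendsto hcont hd (exp_cos_integrable c hc) ht
  rw [this, hF]
  simp only [Real.exp_zero, Real.sin_zero, Real.cos_zero, mul_zero, mul_one, zero_sub]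
  field_simp
  simp

lemma int_one_sub_cos_exp (c : ℝ) (hc : 0 < c) :
    ∫ r in Ioi (0 : ℝ), (1 - Real.cos r) * Real.exp (-(c * r))
      = 1 / c - c / (1 + c ^ 2) := by
  have heq : ∀ r : ℝ, (1 - Real.cos r) * Real.exp (-(c * r))
      = Real.exp (-(c * r)) - Real.exp (-(c * r)) * Real.cos r := fun r => by ring
  simp_rw [heq]
  rw [integral_sub (exp_rate_integrable c hc) (exp_cos_integrable c hc),
    int_exp_rate c hc, int_exp_cos c hc]

lemma one_sub_cos_exp_integrable (c : ℝ) (hc : 0 < c) :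
    IntegrableOn (fun r : ℝ => (1 - Real.cos r) * Real.exp (-(c * r))) (Ioi (0 : ℝ)) := by
  have heq : ∀ r : ℝ, (1 - Real.cos r) * Real.exp (-(c * r))
      = Real.exp (-(c * r)) - Real.exp (-(c * r)) * Real.cos r := fun r => by ring
  simp_rw [heq]
  exact (exp_rate_integrable c hc).sub (exp_cos_integrable c hc)

lemma K_eq_J (p : ℝ) (hp1 : 1 < p) (hp2 : p < 2) :
    Real.Gamma (p + 1) * ∫ r in Ioi (0 : ℝ), (1 - Real.cos r) * r ^ (-(p + 1))
      = ∫ t in Ioi (0 : ℝ), t ^ (p - 1) / (1 + t ^ 2) := by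
  set μ := volume.restrict (Ioi (0 : ℝ)) with hμ
  set W : ℝ → ℝ → ℝ := fun r t => (1 - Real.cos r) * (t ^ p * Real.exp (-(r * t))) with hW
  have hΓ : 0 < Real.Gamma (p + 1) := Real.Gamma_pos_of_pos (by linarith)
  -- step 1 : inner integral in t
  have step1 : ∀ r : ℝ, r ∈ Ioi (0 : ℝ) →
      ∫ t, W r t ∂μ = (1 - Real.cos r) * r ^ (-(p + 1)) * Real.Gamma (p + 1) := by
    intro r hr
    have hr0 : (0 : ℝ) < r := hr
    have base : ∫ t in Ioi (0 : ℝ), t ^ p * Real.exp (-(r * t))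
        = (1 / r) ^ (p + 1) * Real.Gamma (p + 1) := by
      have := Real.integral_rpow_mul_exp_neg_mul_Ioi (a := p + 1) (r := r)
        (by linarith) hr0
      simpa using this
    have hpow : (1 / r : ℝ) ^ (p + 1) = r ^ (-(p + 1)) := by
      rw [one_div, Real.inv_rpow hr0.le, ← Real.rpow_neg hr0.le]
    rw [hμ, hW]
    rw [integral_const_mul, base, hpow]
    ring
  -- measurability of W on the product
  have hmeasW : AEStronglyMeasurable (Function.uncurry W) (μ.prod μ) := by
    apply Measurable.aestronglyMeasurable
    apply Measurable.mul
    · exact (measurable_fst.cos.const_sub 1)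
    · exact (measurable_snd.pow_const p).mul ((measurable_fst.mul measurable_snd).neg.exp)
  -- integrability of W on the product
  have hint : Integrable (Function.uncurry W) (μ.prod μ) := by
    refine (integrable_prod_iff hmeasW).2 ⟨?_, ?_⟩
    · filter_upwards [ae_restrict_mem measurableSet_Ioi] with r hr
      have hr0 : (0 : ℝ) < r := hr
      have h1 := (gamma_rate_integrable (p + 1) r (by linarith) hr0).const_mul
        (1 - Real.cos r)
      simpa [hW, Function.uncurry] using h1
    · have hcongr : (fun r => ∫ t, ‖Function.uncurry W (r, t)‖ ∂μ)
          =ᵐ[μ] fun r => (1 - Real.cos r) * r ^ (-(p + 1)) * Real.Gamma (p + 1) := by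
        filter_upwards [ae_restrict_mem measurableSet_Ioi] with r hr
        have hr0 : (0 : ℝ) < r := hr
        have hnorm : ∫ t, ‖Function.uncurry W (r, t)‖ ∂μ = ∫ t, W r t ∂μ := by
          rw [hμ]
          refine setIntegral_congr_fun measurableSet_Ioi fun t ht => ?_
          have ht0 : (0 : ℝ) < t := ht
          have : 0 ≤ W r t := by
            apply mul_nonneg (aux_cos_nonneg r)
            positivity
          simp [Function.uncurry, Real.norm_eq_abs, abs_of_nonneg this]
        rw [hnorm, step1 r hr]
      refine Integrable.congr ?_ hcongr.symm
      exact ((hK_int p hp1 hp2).mul_const _)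
  -- main chain
  calc Real.Gamma (p + 1) * ∫ r in Ioi (0 : ℝ), (1 - Real.cos r) * r ^ (-(p + 1))
      = ∫ r, ((1 - Real.cos r) * r ^ (-(p + 1))) * Real.Gamma (p + 1) ∂μ := by
        rw [MeasureTheory.integral_mul_const]; ring
    _ = ∫ r, ∫ t, W r t ∂μ ∂μ := by
        refine (setIntegral_congr_fun measurableSet_Ioi fun r hr => ?_).symm
        rw [step1 r hr]
    _ = ∫ t, ∫ r, W r t ∂μ ∂μ := integral_integral_swap hint
    _ = ∫ t in Ioi (0 : ℝ), t ^ (p - 1) / (1 + t ^ 2) := by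
        refine setIntegral_congr_fun measurableSet_Ioi fun t ht => ?_
        have ht0 : (0 : ℝ) < t := ht
        have harr : ∀ r : ℝ, W r t = t ^ p * ((1 - Real.cos r) * Real.exp (-(t * r))) := by
          intro r; rw [hW]; dsimp only; rw [mul_comm r t]; ring
        simp_rw [harr]
        rw [hμ, integral_const_mul, int_one_sub_cos_exp t ht0]
        have ht1 : t ^ (p - 1) = t ^ p / t := by
          rw [Real.rpow_sub ht0, Real.rpow_one]
        rw [ht1]
        have h2 : (1 : ℝ) + t ^ 2 ≠ 0 := by positivity
        field_simp
        ring

lemma gauss_rpow_int (p s : ℝ) (hp1 : 0 < p) (hs : 0 < s) :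
    ∫ t in Ioi (0 : ℝ), t ^ (p - 1) * Real.exp (-(s * t ^ 2))
      = 1 / 2 * ((1 / s) ^ (p / 2) * Real.Gamma (p / 2)) := by
  have h := integral_comp_rpow_Ioi_of_pos
    (g := fun u => (1 / 2 : ℝ) * (u ^ (p / 2 - 1) * Real.exp (-(s * u)))) (p := 2) two_pos
  have h2 : ∫ u in Ioi (0 : ℝ), (1 / 2 : ℝ) * (u ^ (p / 2 - 1) * Real.exp (-(s * u)))
      = 1 / 2 * ((1 / s) ^ (p / 2) * Real.Gamma (p / 2)) := by
    rw [integral_const_mul, Real.integral_rpow_mul_exp_neg_mul_Ioi (by linarith) hs]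
  rw [← h2, ← h]
  refine setIntegral_congr_fun measurableSet_Ioi fun x hx => ?_
  have hx0 : (0 : ℝ) < x := hx
  have e1 : x ^ ((2 : ℝ) - 1) = x := by norm_num
  have e2 : (x ^ (2 : ℝ)) = x ^ (2 : ℕ) := by
    rw [← Real.rpow_natCast x 2]; norm_num
  have e3 : (x ^ (2 : ℝ)) ^ (p / 2 - 1) = x ^ (p - 2) := by
    rw [← Real.rpow_mul hx0.le]; congr 1; ring
  have e4 : x * x ^ (p - 2) = x ^ (p - 1) := by
    nth_rewrite 1 [← Real.rpow_one x]
    rw [← Real.rpow_add hx0]; congr 1; ring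
  rw [smul_eq_mul]
  calc x ^ (p - 1) * Real.exp (-(s * x ^ 2))
      = (x * x ^ (p - 2)) * Real.exp (-(s * x ^ 2)) := by rw [e4]
    _ = 2 * x ^ ((2:ℝ) - 1) * (1 / 2 * ((x ^ (2:ℝ)) ^ (p / 2 - 1)
          * Real.exp (-(s * x ^ (2:ℝ))))) := by
        rw [e1, e3, e2]; ring

lemma J_val (p : ℝ) (hp1 : 1 < p) (hp2 : p < 2) :
    ∫ t in Ioi (0 : ℝ), t ^ (p - 1) / (1 + t ^ 2)
      = 1 / 2 * Real.Gamma (p / 2) * Real.Gamma (1 - p / 2) := by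
  set μ := volume.restrict (Ioi (0 : ℝ)) with hμ
  set V : ℝ → ℝ → ℝ := fun t s => t ^ (p - 1) * Real.exp (-((1 + t ^ 2) * s)) with hV
  have step1 : ∀ t : ℝ, t ∈ Ioi (0 : ℝ) →
      ∫ s, V t s ∂μ = t ^ (p - 1) / (1 + t ^ 2) := by
    intro t ht
    have ht0 : (0 : ℝ) < t := ht
    have hpos : (0 : ℝ) < 1 + t ^ 2 := by positivity
    rw [hμ, hV]
    rw [integral_const_mul, int_exp_rate _ hpos]
    field_simp
  have hmeasV : AEStronglyMeasurable (Function.uncurry V) (μ.prod μ) := by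
    apply Measurable.aestronglyMeasurable
    exact (measurable_fst.pow_const (p - 1)).mul
      ((((measurable_fst.pow_const 2).const_add 1).mul measurable_snd).neg.exp)
  have hint : Integrable (Function.uncurry V) (μ.prod μ) := by
    refine (integrable_prod_iff hmeasV).2 ⟨?_, ?_⟩
    · filter_upwards [ae_restrict_mem measurableSet_Ioi] with t ht
      have ht0 : (0 : ℝ) < t := ht
      have hpos : (0 : ℝ) < 1 + t ^ 2 := by positivity
      have h1 := (exp_rate_integrable _ hpos).const_mul (t ^ (p - 1))
      simpa [hV, Function.uncurry] using h1
    · have hcongr : (fun t => ∫ s, ‖Function.uncurry V (t, s)‖ ∂μ)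
          =ᵐ[μ] fun t => t ^ (p - 1) / (1 + t ^ 2) := by
        filter_upwards [ae_restrict_mem measurableSet_Ioi] with t ht
        have ht0 : (0 : ℝ) < t := ht
        have hnorm : ∫ s, ‖Function.uncurry V (t, s)‖ ∂μ = ∫ s, V t s ∂μ := by
          rw [hμ]
          refine setIntegral_congr_fun measurableSet_Ioi fun s hs => ?_
          have : 0 ≤ V t s := by
            apply mul_nonneg (Real.rpow_nonneg ht0.le _) (Real.exp_nonneg _)
          simp [Function.uncurry, Real.norm_eq_abs, abs_of_nonneg this]
        rw [hnorm, step1 t ht]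
      exact Integrable.congr (hJ_int p hp1 hp2) hcongr.symm
  calc ∫ t in Ioi (0 : ℝ), t ^ (p - 1) / (1 + t ^ 2)
      = ∫ t, ∫ s, V t s ∂μ ∂μ := by
        refine (setIntegral_congr_fun measurableSet_Ioi fun t ht => ?_).symm
        rw [step1 t ht]
    _ = ∫ s, ∫ t, V t s ∂μ ∂μ := integral_integral_swap hint
    _ = ∫ s in Ioi (0 : ℝ), (1 / 2 * Real.Gamma (p / 2))
          * (s ^ ((1 - p / 2) - 1) * Real.exp (-(1 * s))) := by
        refine setIntegral_congr_fun measurableSet_Ioi fun s hs => ?_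
        have hs0 : (0 : ℝ) < s := hs
        have harr : ∀ t : ℝ, V t s
            = (t ^ (p - 1) * Real.exp (-(s * t ^ 2))) * Real.exp (-s) := by
          intro t; rw [hV]; dsimp only
          rw [mul_assoc, ← Real.exp_add]; congr 1; ring
        simp_rw [harr]
        rw [hμ, integral_mul_const, gauss_rpow_int p s (by linarith) hs0]
        have e5 : (1 / s : ℝ) ^ (p / 2) = s ^ ((1 - p / 2) - 1) := by
          rw [one_div, Real.inv_rpow hs0.le, ← Real.rpow_neg hs0.le]
          congr 1; ring
        rw [e5, one_mul]
        ring
    _ = 1 / 2 * Real.Gamma (p / 2) * Real.Gamma (1 - p / 2) := by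
        rw [integral_const_mul, Real.integral_rpow_mul_exp_neg_mul_Ioi (by linarith) one_pos]
        norm_num

set_option maxHeartbeats 2000000 in
lemma K_val (p : ℝ) (hp1 : 1 < p) (hp2 : p < 2) :
    ∫ r in Ioi (0 : ℝ), (1 - Real.cos r) * r ^ (-(p + 1))
      = Real.Gamma (1 - p) * Real.cos (p * π / 2) / p := by
  have hπ := Real.pi_pos
  have hp0 : (0 : ℝ) < p := by linarith
  have hΓp : 0 < Real.Gamma p := Real.Gamma_pos_of_pos hp0
  have hΓ1 : Real.Gamma (p + 1) = p * Real.Gamma p := Real.Gamma_add_one (by linarith)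
  have hΓpos : 0 < Real.Gamma (p + 1) := Real.Gamma_pos_of_pos (by linarith)
  have refl1 : Real.Gamma (p / 2) * Real.Gamma (1 - p / 2) = π / Real.sin (π * (p / 2)) :=
    Real.Gamma_mul_Gamma_one_sub (p / 2)
  have refl2 : Real.Gamma p * Real.Gamma (1 - p) = π / Real.sin (π * p) :=
    Real.Gamma_mul_Gamma_one_sub p
  have hsin2 : Real.sin (π * p) = 2 * Real.sin (π * (p / 2)) * Real.cos (π * (p / 2)) := by
    rw [show π * p = 2 * (π * (p / 2)) by ring, Real.sin_two_mul]
  have hs : 0 < Real.sin (π * (p / 2)) := by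
    apply Real.sin_pos_of_pos_of_lt_pi
    · positivity
    · nlinarith
  have hc : Real.cos (π * (p / 2)) < 0 := by
    apply Real.cos_neg_of_pi_div_two_lt_of_lt
    · nlinarith
    · nlinarith
  have hsinp : Real.sin (π * p) ≠ 0 := by
    rw [hsin2]; intro h; nlinarith
  have hΓ1p : Real.Gamma (1 - p) = π / (Real.sin (π * p) * Real.Gamma p) := by
    rw [eq_div_iff (mul_ne_zero hsinp hΓp.ne')]
    calc Real.Gamma (1 - p) * (Real.sin (π * p) * Real.Gamma p)
        = (Real.Gamma p * Real.Gamma (1 - p)) * Real.sin (π * p) := by ring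
      _ = π / Real.sin (π * p) * Real.sin (π * p) := by rw [refl2]
      _ = π := div_mul_cancel₀ _ hsinp
  have hK : ∫ r in Ioi (0 : ℝ), (1 - Real.cos r) * r ^ (-(p + 1))
      = (1 / 2 * Real.Gamma (p / 2) * Real.Gamma (1 - p / 2)) / Real.Gamma (p + 1) := by
    rw [eq_div_iff hΓpos.ne', mul_comm]
    rw [K_eq_J p hp1 hp2, J_val p hp1 hp2]
  rw [hK, hΓ1]
  rw [mul_assoc (1/2 : ℝ), refl1, hΓ1p, hsin2]
  rw [show p * π / 2 = π * (p / 2) by ring]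
  have hcne : Real.cos (π * p * (1 / 2)) ≠ 0 := by
    rw [show π * p * (1 / 2) = π * (p / 2) by ring]; exact hc.ne
  field_simp
  have hs' : 0 < Real.sin (π * p / 2) := by
    rw [show π * p / 2 = π * (p / 2) by ring]; exact hs
  have hc' : Real.cos (π * p / 2) ≠ 0 := by
    rw [show π * p / 2 = π * (p / 2) by ring]; exact hc.ne
  rw [div_eq_div_iff (by positivity) (mul_ne_zero hs'.ne' hc')]
  ring

/-- The bound function for the polar integrand. -/
noncomputable def Bnd (p : ℝ) : ℝ → ℝ := fun r => 2 * min (r ^ (1 - p)) (r ^ (-(p + 1)))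

lemma Bnd_int (p : ℝ) (hp1 : 1 < p) (hp2 : p < 2) :
    IntegrableOn (Bnd p) (Ioi (0 : ℝ)) := by
  have hmeas : ∀ s : Set ℝ, s ⊆ Ioi 0 → MeasurableSet s →
      AEStronglyMeasurable (Bnd p) (volume.restrict s) := by
    intro s hs hsm
    refine ContinuousOn.aestronglyMeasurable ?_ hsm
    refine ContinuousOn.mul continuousOn_const ?_
    intro x hx
    exact Filter.Tendsto.min
      ((Real.continuousAt_rpow_const x _ (Or.inl (ne_of_gt (hs hx)))).continuousWithinAt)
      ((Real.continuousAt_rpow_const x _ (Or.inl (ne_of_gt (hs hx)))).continuousWithinAt)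
  have hBnonneg : ∀ r : ℝ, 0 < r → 0 ≤ Bnd p r := by
    intro r hr
    have := Real.rpow_nonneg hr.le (1 - p)
    have := Real.rpow_nonneg hr.le (-(p + 1))
    simp only [Bnd]
    positivity
  have h1 : IntegrableOn (Bnd p) (Ioc (0 : ℝ) 1) := by
    have hbound : IntegrableOn (fun r : ℝ => 2 * r ^ (1 - p)) (Ioc (0 : ℝ) 1) := by
      have := intervalIntegral.intervalIntegrable_rpow' (a := 0) (b := 1) (r := 1 - p)
        (by linarith)
      rw [intervalIntegrable_iff_integrableOn_Ioc_of_le zero_le_one] at this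
      exact this.const_mul 2
    refine Integrable.mono hbound (hmeas _ (fun x hx => hx.1) measurableSet_Ioc) ?_
    filter_upwards [ae_restrict_mem measurableSet_Ioc] with r hr
    have hr0 : (0 : ℝ) < r := hr.1
    rw [Real.norm_eq_abs, Real.norm_eq_abs, abs_of_nonneg (hBnonneg r hr0),
      abs_of_nonneg (by positivity)]
    simp only [Bnd]
    have := min_le_left (r ^ (1 - p)) (r ^ (-(p + 1)))
    linarith
  have h2 : IntegrableOn (Bnd p) (Ioi (1 : ℝ)) := by
    have hbound : IntegrableOn (fun r : ℝ => 2 * r ^ (-(p + 1))) (Ioi (1 : ℝ)) :=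
      (integrableOn_Ioi_rpow_of_lt (by linarith) one_pos).const_mul 2
    refine Integrable.mono hbound (hmeas _ (fun x hx => mem_Ioi.2 (lt_trans one_pos (mem_Ioi.1 hx)))
      measurableSet_Ioi) ?_
    filter_upwards [ae_restrict_mem measurableSet_Ioi] with r hr
    have hr0 : (0 : ℝ) < r := lt_trans one_pos hr
    rw [Real.norm_eq_abs, Real.norm_eq_abs, abs_of_nonneg (hBnonneg r hr0),
      abs_of_nonneg (by positivity)]
    simp only [Bnd]
    have := min_le_right (r ^ (1 - p)) (r ^ (-(p + 1)))
    linarith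
  have := h1.union h2
  rwa [Set.Ioc_union_Ioi_eq_Ioi zero_le_one] at this

/-- Pointwise bound for the polar integrand. -/
lemma polar_ptwise (p : ℝ) (hp1 : 1 < p) (hp2 : p < 2) (r θ : ℝ) (hr : 0 < r) :
    ‖(1 - Real.cos (r * (Real.cos θ + Real.sin θ))) * r ^ (-(p + 1))‖ ≤ Bnd p r := by
  have ha : (Real.cos θ + Real.sin θ) ^ 2 ≤ 2 := by
    nlinarith [Real.sin_sq_add_cos_sq θ, sq_nonneg (Real.cos θ - Real.sin θ)]
  have h0 : 0 ≤ (1 - Real.cos (r * (Real.cos θ + Real.sin θ))) * r ^ (-(p + 1)) :=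
    mul_nonneg (aux_cos_nonneg _) (Real.rpow_nonneg hr.le _)
  rw [Real.norm_eq_abs, abs_of_nonneg h0]
  rcases le_total (r ^ (1 - p)) (r ^ (-(p + 1))) with h | h
  · rw [Bnd, min_eq_left h]
    have hb : 1 - Real.cos (r * (Real.cos θ + Real.sin θ)) ≤ 2 * r ^ 2 := by
      have := aux_cos_sq (r * (Real.cos θ + Real.sin θ))
      nlinarith [sq_nonneg r]
    calc (1 - Real.cos (r * (Real.cos θ + Real.sin θ))) * r ^ (-(p + 1))
        ≤ (2 * r ^ 2) * r ^ (-(p + 1)) :=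
          mul_le_mul_of_nonneg_right hb (Real.rpow_nonneg hr.le _)
      _ = 2 * r ^ (1 - p) := by
          rw [mul_assoc, ← Real.rpow_natCast r 2, ← Real.rpow_add hr]
          norm_num
          congr 1
          ring
  · rw [Bnd, min_eq_right h]
    exact mul_le_mul_of_nonneg_right (aux_cos_two _) (Real.rpow_nonneg hr.le _)

lemma polar_integrable (p : ℝ) (hp1 : 1 < p) (hp2 : p < 2) :
    Integrable (fun q : ℝ × ℝ =>
        (1 - Real.cos (q.1 * (Real.cos q.2 + Real.sin q.2))) * q.1 ^ (-(p + 1)))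
      ((volume.restrict (Ioi (0 : ℝ))).prod (volume.restrict (Ioo (-π) π))) := by
  set μ := volume.restrict (Ioi (0 : ℝ)) with hμ
  set ν := volume.restrict (Ioo (-π) π) with hν
  set f : ℝ × ℝ → ℝ := fun q =>
    (1 - Real.cos (q.1 * (Real.cos q.2 + Real.sin q.2))) * q.1 ^ (-(p + 1)) with hf
  have hmeasf : AEStronglyMeasurable f (μ.prod ν) := by
    apply Measurable.aestronglyMeasurable
    exact ((measurable_fst.mul (measurable_snd.cos.add measurable_snd.sin)).cos.const_sub
      1).mul (measurable_fst.pow_const _)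
  refine (integrable_prod_iff hmeasf).2 ⟨?_, ?_⟩
  · refine Eventually.of_forall fun r => ?_
    have hcont : Continuous fun θ : ℝ => f (r, θ) := by
      simp only [hf]; fun_prop
    refine (hcont.integrableOn_Icc (a := -π) (b := π)).mono_set Ioo_subset_Icc_self
  · have hslice : ∀ r : ℝ, r ∈ Ioi (0 : ℝ) → ∫ θ, ‖f (r, θ)‖ ∂ν ≤ Bnd p r * (2 * π) := by
      intro r hr
      have hr0 : (0 : ℝ) < r := hr
      have hcont : Continuous fun θ : ℝ => ‖f (r, θ)‖ := by
        simp only [hf]; fun_prop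
      have hint1 : Integrable (fun θ : ℝ => ‖f (r, θ)‖) ν :=
        (hcont.integrableOn_Icc (a := -π) (b := π)).mono_set Ioo_subset_Icc_self
      have hint2 : Integrable (fun _ : ℝ => Bnd p r) ν := integrable_const _
      have hle := integral_mono_ae hint1 hint2 (Eventually.of_forall fun θ =>
        polar_ptwise p hp1 hp2 r θ hr0)
      have hval : ∫ _ : ℝ, Bnd p r ∂ν = Bnd p r * (2 * π) := by
        rw [hν, integral_const, measureReal_restrict_apply_univ, Real.volume_real_Ioo, smul_eq_mul,
          max_eq_left (by linarith [Real.pi_pos] : (0:ℝ) ≤ π - -π)]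
        ring
      rw [hval] at hle
      exact hle
    have hBint : Integrable (fun r : ℝ => Bnd p r * (2 * π)) μ :=
      (Bnd_int p hp1 hp2).mul_const _
    refine Integrable.mono hBint hmeasf.norm.integral_prod_right' ?_
    filter_upwards [ae_restrict_mem measurableSet_Ioi] with r hr
    have hr0 : (0 : ℝ) < r := hr
    have h0 : 0 ≤ ∫ θ, ‖f (r, θ)‖ ∂ν := integral_nonneg fun θ => norm_nonneg _
    rw [Real.norm_eq_abs, abs_of_nonneg h0, Real.norm_eq_abs]
    calc ∫ θ, ‖f (r, θ)‖ ∂ν ≤ Bnd p r * (2 * π) := hslice r hr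
      _ ≤ |Bnd p r * (2 * π)| := le_abs_self _

/-- Scaling of the one-dimensional integral. -/
lemma scale_int (p : ℝ) (hp1 : 1 < p) (hp2 : p < 2) (a : ℝ) :
    ∫ r in Ioi (0 : ℝ), (1 - Real.cos (a * r)) * r ^ (-(p + 1))
      = |a| ^ p * ∫ r in Ioi (0 : ℝ), (1 - Real.cos r) * r ^ (-(p + 1)) := by
  rcases eq_or_ne a 0 with rfl | ha
  · rw [abs_zero, Real.zero_rpow (by linarith : p ≠ 0)]
    simp
  · have hb : 0 < |a| := abs_pos.mpr ha
    have hcos : ∀ r : ℝ, Real.cos (a * r) = Real.cos (|a| * r) := by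
      intro r
      rcases abs_choice a with h | h
      · rw [h]
      · rw [h, neg_mul, Real.cos_neg]
    have step : ∀ r : ℝ, r ∈ Ioi (0 : ℝ) → (1 - Real.cos (a * r)) * r ^ (-(p + 1))
        = |a| ^ (p + 1) * ((1 - Real.cos (|a| * r)) * (|a| * r) ^ (-(p + 1))) := by
      intro r hr
      have hr0 : (0 : ℝ) < r := hr
      rw [hcos r, Real.mul_rpow hb.le hr0.le]
      have : |a| ^ (p + 1) * |a| ^ (-(p + 1)) = 1 := by
        rw [← Real.rpow_add hb, show p + 1 + -(p + 1) = 0 by ring, Real.rpow_zero]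
      calc (1 - Real.cos (|a| * r)) * r ^ (-(p + 1))
          = (|a| ^ (p + 1) * |a| ^ (-(p + 1))) * ((1 - Real.cos (|a| * r)) * r ^ (-(p + 1)))
            := by rw [this, one_mul]
        _ = |a| ^ (p + 1) * ((1 - Real.cos (|a| * r)) * (|a| ^ (-(p + 1)) * r ^ (-(p + 1))))
            := by ring
    rw [setIntegral_congr_fun measurableSet_Ioi step, integral_const_mul]
    have hcomp := integral_comp_mul_left_Ioi
      (g := fun x => (1 - Real.cos x) * x ^ (-(p + 1))) 0 hb
    rw [mul_zero] at hcomp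
    rw [hcomp, smul_eq_mul]
    rw [← mul_assoc, ← Real.rpow_neg_one |a|, ← Real.rpow_add hb]
    congr 1
    ring

theorem stmt8 (p : ℝ) (hp1 : 1 < p) (hp2 : p < 2) :
    ∫ y : ℝ, ∫ x : ℝ, (1 - Real.cos (x + y)) / (x ^ 2 + y ^ 2) ^ ((p + 2) / 2)
      = (Real.Gamma (1 - p) * Real.cos (p * π / 2) / p) *
        ∫ θ in (0 : ℝ)..(2 * π), (1 + Real.sin (2 * θ)) ^ (p / 2) := by
  have hπ := Real.pi_pos
  set G : ℝ × ℝ → ℝ := fun q =>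
    (1 - Real.cos (q.1 + q.2)) / (q.1 ^ 2 + q.2 ^ 2) ^ ((p + 2) / 2) with hG
  set f : ℝ × ℝ → ℝ := fun q =>
    (1 - Real.cos (q.1 * (Real.cos q.2 + Real.sin q.2))) * q.1 ^ (-(p + 1)) with hf
  set K : ℝ := ∫ r in Ioi (0 : ℝ), (1 - Real.cos r) * r ^ (-(p + 1)) with hK
  -- (A) pointwise identity on the polar target
  have hA : ∀ q : ℝ × ℝ, q ∈ polarCoord.target → q.1 • G (polarCoord.symm q) = f q := by
    intro q hq
    rw [polarCoord_target] at hq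
    obtain ⟨hr, -⟩ := hq
    have hr0 : (0 : ℝ) < q.1 := hr
    rw [polarCoord_symm_apply, hG, hf]
    dsimp only
    have e1 : q.1 * Real.cos q.2 + q.1 * Real.sin q.2
        = q.1 * (Real.cos q.2 + Real.sin q.2) := by ring
    have e2 : (q.1 * Real.cos q.2) ^ 2 + (q.1 * Real.sin q.2) ^ 2 = q.1 ^ 2 := by
      have := Real.sin_sq_add_cos_sq q.2; nlinarith
    rw [e1, e2]
    have e3 : ((q.1 ^ 2 : ℝ)) ^ ((p + 2) / 2) = q.1 ^ (p + 2) := by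
      rw [← Real.rpow_natCast q.1 2, ← Real.rpow_mul hr0.le]
      congr 1
      push_cast
      ring
    rw [e3, smul_eq_mul]
    rw [div_eq_mul_inv, ← Real.rpow_neg hr0.le]
    nth_rewrite 1 [← Real.rpow_one q.1]
    rw [mul_comm (q.1 ^ (1:ℝ)), mul_assoc, ← Real.rpow_add hr0]
    congr 2
    ring
  -- (B) integrability of f on the polar target
  have hfint : IntegrableOn f polarCoord.target := by
    rw [polarCoord_target]
    unfold IntegrableOn
    rw [Measure.volume_eq_prod, ← Measure.prod_restrict]
    exact polar_integrable p hp1 hp2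
  -- (C) integrability of G on the plane
  set Bd : ℝ × ℝ → ℝ × ℝ →L[ℝ] ℝ × ℝ := fun q =>
    LinearMap.toContinuousLinearMap (Matrix.toLin (Module.Basis.finTwoProd ℝ) (Module.Basis.finTwoProd ℝ)
      !![Real.cos q.2, -q.1 * Real.sin q.2; Real.sin q.2, q.1 * Real.cos q.2]) with hBd
  have hBdet : ∀ q : ℝ × ℝ, (Bd q).det = q.1 := by
    intro q
    conv_rhs => rw [← one_mul q.1, ← Real.cos_sq_add_sin_sq q.2]
    simp only [hBd, neg_mul, LinearMap.det_toContinuousLinearMap, LinearMap.det_toLin,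
      Matrix.det_fin_two_of, sub_neg_eq_add]
    ring
  have hGint : Integrable G := by
    have hiff := integrableOn_image_iff_integrableOn_abs_det_fderiv_smul volume
      polarCoord.open_target.measurableSet
      (fun q (_ : q ∈ polarCoord.target) =>
        (hasFDerivAt_polarCoord_symm q).hasFDerivWithinAt)
      (by rw [← polarCoord.symm_source]; exact polarCoord.symm.injOn) G
    rw [polarCoord.symm_image_target_eq_source] at hiff
    have hright : IntegrableOn (fun q => |(Bd q).det| • G (polarCoord.symm q))
        polarCoord.target := by
      refine IntegrableOn.congr_fun hfint ?_ polarCoord.open_target.measurableSet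
      intro q hq
      have hq1 : (0 : ℝ) < q.1 := by rw [polarCoord_target] at hq; exact hq.1
      dsimp only
      rw [hBdet q, abs_of_pos hq1, ← hA q hq]
    have hsrc := hiff.2 hright
    unfold IntegrableOn at hsrc
    rwa [Measure.restrict_congr_set polarCoord_source_ae_eq_univ,
      Measure.restrict_univ] at hsrc
  -- (D) main chain
  have hGswap : ∀ x y : ℝ, (1 - Real.cos (x + y)) / (x ^ 2 + y ^ 2) ^ ((p + 2) / 2)
      = G (y, x) := by
    intro x y
    rw [hG]
    dsimp only
    rw [add_comm y x, add_comm (y ^ 2) (x ^ 2)]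
  have hGunc : (Function.uncurry fun y x : ℝ => G (y, x)) = G := by
    ext z
    simp [Function.uncurry]
  have hGint2 : Integrable (Function.uncurry fun y x : ℝ => G (y, x))
      (volume.prod volume) := by
    rw [hGunc, ← Measure.volume_eq_prod]
    exact hGint
  have hmeq : (volume : Measure (ℝ × ℝ)).restrict (Ioi (0 : ℝ) ×ˢ Ioo (-π) π)
      = (volume.restrict (Ioi (0 : ℝ))).prod (volume.restrict (Ioo (-π) π)) := by
    rw [Measure.volume_eq_prod, Measure.prod_restrict]
  calc ∫ y : ℝ, ∫ x : ℝ, (1 - Real.cos (x + y)) / (x ^ 2 + y ^ 2) ^ ((p + 2) / 2)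
      = ∫ y : ℝ, ∫ x : ℝ, G (y, x) := by simp_rw [hGswap]
    _ = ∫ z : ℝ × ℝ, G z := by
        rw [integral_integral hGint2, ← Measure.volume_eq_prod]
    _ = ∫ q in polarCoord.target, q.1 • G (polarCoord.symm q) :=
        (integral_comp_polarCoord_symm G).symm
    _ = ∫ q in polarCoord.target, f q :=
        setIntegral_congr_fun polarCoord.open_target.measurableSet hA
    _ = ∫ θ in Ioo (-π) π, ∫ r in Ioi (0 : ℝ), f (r, θ) := by
        rw [polarCoord_target, hmeq]
        exact integral_prod_symm f (polar_integrable p hp1 hp2)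
    _ = ∫ θ in Ioo (-π) π, (1 + Real.sin (2 * θ)) ^ (p / 2) * K := by
        refine setIntegral_congr_fun measurableSet_Ioo fun θ hθ => ?_
        have h1 : ∫ r in Ioi (0 : ℝ), f (r, θ)
            = |Real.cos θ + Real.sin θ| ^ p * K := by
          have e0 : ∀ r : ℝ, r ∈ Ioi (0 : ℝ) → f (r, θ)
              = (1 - Real.cos ((Real.cos θ + Real.sin θ) * r)) * r ^ (-(p + 1)) := by
            intro r _
            rw [hf]
            dsimp only
            rw [mul_comm r (Real.cos θ + Real.sin θ)]
          rw [setIntegral_congr_fun measurableSet_Ioi e0,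
            scale_int p hp1 hp2 (Real.cos θ + Real.sin θ), hK]
        rw [h1]
        congr 1
        have h2 : (Real.cos θ + Real.sin θ) ^ 2 = 1 + Real.sin (2 * θ) := by
          rw [Real.sin_two_mul]
          nlinarith [Real.sin_sq_add_cos_sq θ]
        rw [← h2, ← sq_abs, ← Real.rpow_natCast |Real.cos θ + Real.sin θ| 2,
          ← Real.rpow_mul (abs_nonneg _)]
        congr 1
        push_cast
        ring
    _ = (∫ θ in Ioo (-π) π, (1 + Real.sin (2 * θ)) ^ (p / 2)) * K := by
        rw [integral_mul_const]
    _ = (∫ θ in (0 : ℝ)..(2 * π), (1 + Real.sin (2 * θ)) ^ (p / 2)) * K := by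
        congr 1
        have hper : Function.Periodic (fun θ : ℝ => (1 + Real.sin (2 * θ)) ^ (p / 2))
            (2 * π) := by
          intro x
          have hsx : Real.sin (2 * (x + 2 * π)) = Real.sin (2 * x) := by
            rw [show 2 * (x + 2 * π) = 2 * x + 2 * π + 2 * π by ring,
              Real.sin_add_two_pi, Real.sin_add_two_pi]
          simp [hsx]
        have hpe := hper.intervalIntegral_add_eq (-π) 0
        rw [zero_add, show -π + 2 * π = π by ring] at hpe
        rw [← hpe, intervalIntegral.integral_of_le (by linarith),
          integral_Ioc_eq_integral_Ioo]
    _ = (Real.Gamma (1 - p) * Real.cos (p * π / 2) / p) *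
          ∫ θ in (0 : ℝ)..(2 * π), (1 + Real.sin (2 * θ)) ^ (p / 2) := by
        rw [hK, K_val p hp1 hp2]
        ring
end

section
/- Let d ≥ 2, let Γ be a finite Borel measure on the unit sphere S_d of ℝ^d, fix i₀ ∈ {1,…,d} and m with 2 ≤ m ≤ d, and define Δ : ℝ^m → ℝ by Δ(θ₁,…,θ_m) = ∫_{S_d} s_{i₀} · sin(θ_m s_m/2) · sin((θ₁s₁ + … + θ_{m−1}s_{m−1})/2) · sin((θ₁s₁ + … + θ_m s_m)/2) dΓ(s). If for every k ∈ {1,…,m−1} the mixed partial derivative ∂²Δ/∂θ_k∂θ_m vanishes identically on ℝ^m, then Δ vanishes identically on ℝ^m. -/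
open MeasureTheory Real

/-- Partial derivative of `f : ℝ^m → ℝ` in the `i`-th coordinate direction. -/
noncomputable def pderiv' {m : ℕ} (i : Fin m) (f : (Fin m → ℝ) → ℝ) : (Fin m → ℝ) → ℝ :=
  fun θ => deriv (fun t : ℝ => f (Function.update θ i t)) (θ i)

namespace Stmt14Aux

-- product bound helper
lemma bnd {a b A B : ℝ} (ha : |a| ≤ A) (hb : |b| ≤ B) : |a * b| ≤ A * B := by
  rw [abs_mul]
  exact mul_le_mul ha hb (abs_nonneg b) (le_trans (abs_nonneg a) ha)

lemma coord_abs_le_norm {d : ℕ} (s : EuclideanSpace ℝ (Fin d)) (i : Fin d) : |s i| ≤ ‖s‖ := by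
  rw [EuclideanSpace.norm_eq]
  have h1 : |s i| = Real.sqrt (‖s i‖ ^ 2) := by
    rw [Real.sqrt_sq_eq_abs, Real.norm_eq_abs, abs_abs]
  rw [h1]
  apply Real.sqrt_le_sqrt
  exact Finset.single_le_sum (f := fun j => ‖s j‖ ^ 2) (fun j _ => sq_nonneg _)
    (Finset.mem_univ i)

variable {d n : ℕ}

/-- `A θ s = ∑_{j<m-1} θ_j s_j`. -/
noncomputable def Afun (hmd : n + 2 ≤ d) (θ : Fin (n + 2) → ℝ)
    (s : EuclideanSpace ℝ (Fin d)) : ℝ :=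
  ∑ j : Fin (n + 1), θ j.castSucc * s (Fin.castLE hmd j.castSucc)

/-- the integrand of Δ. -/
noncomputable def ffun (hmd : n + 2 ≤ d) (i₀ : Fin d) (θ : Fin (n + 2) → ℝ)
    (s : EuclideanSpace ℝ (Fin d)) : ℝ :=
  s i₀ * Real.sin (θ (Fin.last (n + 1)) * s (Fin.castLE hmd (Fin.last (n + 1))) / 2) *
    Real.sin (Afun hmd θ s / 2) *
    Real.sin ((Afun hmd θ s + θ (Fin.last (n + 1)) * s (Fin.castLE hmd (Fin.last (n + 1)))) / 2)

/-- ∂f/∂θ_m. -/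
noncomputable def gfun (hmd : n + 2 ≤ d) (i₀ : Fin d) (θ : Fin (n + 2) → ℝ)
    (s : EuclideanSpace ℝ (Fin d)) : ℝ :=
  s i₀ * (Real.cos (θ (Fin.last (n + 1)) * s (Fin.castLE hmd (Fin.last (n + 1))) / 2) *
      (s (Fin.castLE hmd (Fin.last (n + 1))) / 2)) *
    Real.sin (Afun hmd θ s / 2) *
    Real.sin ((Afun hmd θ s + θ (Fin.last (n + 1)) * s (Fin.castLE hmd (Fin.last (n + 1)))) / 2) +
  s i₀ * Real.sin (θ (Fin.last (n + 1)) * s (Fin.castLE hmd (Fin.last (n + 1))) / 2) *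
    Real.sin (Afun hmd θ s / 2) *
    (Real.cos ((Afun hmd θ s + θ (Fin.last (n + 1)) * s (Fin.castLE hmd (Fin.last (n + 1)))) / 2) *
      (s (Fin.castLE hmd (Fin.last (n + 1))) / 2))

/-- ∂²f/∂θ_k∂θ_m. -/
noncomputable def hfun (hmd : n + 2 ≤ d) (i₀ : Fin d) (k : Fin (n + 1)) (θ : Fin (n + 2) → ℝ)
    (s : EuclideanSpace ℝ (Fin d)) : ℝ :=
  s i₀ * (Real.cos (θ (Fin.last (n + 1)) * s (Fin.castLE hmd (Fin.last (n + 1))) / 2) *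
      (s (Fin.castLE hmd (Fin.last (n + 1))) / 2)) *
    (Real.cos (Afun hmd θ s / 2) * (s (Fin.castLE hmd k.castSucc) / 2)) *
    Real.sin ((Afun hmd θ s + θ (Fin.last (n + 1)) * s (Fin.castLE hmd (Fin.last (n + 1)))) / 2) +
  s i₀ * (Real.cos (θ (Fin.last (n + 1)) * s (Fin.castLE hmd (Fin.last (n + 1))) / 2) *
      (s (Fin.castLE hmd (Fin.last (n + 1))) / 2)) *
    Real.sin (Afun hmd θ s / 2) *
    (Real.cos ((Afun hmd θ s + θ (Fin.last (n + 1)) * s (Fin.castLE hmd (Fin.last (n + 1)))) / 2) *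
      (s (Fin.castLE hmd k.castSucc) / 2)) +
  (s i₀ * Real.sin (θ (Fin.last (n + 1)) * s (Fin.castLE hmd (Fin.last (n + 1))) / 2) *
    (Real.cos (Afun hmd θ s / 2) * (s (Fin.castLE hmd k.castSucc) / 2)) *
    (Real.cos ((Afun hmd θ s + θ (Fin.last (n + 1)) * s (Fin.castLE hmd (Fin.last (n + 1)))) / 2) *
      (s (Fin.castLE hmd (Fin.last (n + 1))) / 2)) +
  s i₀ * Real.sin (θ (Fin.last (n + 1)) * s (Fin.castLE hmd (Fin.last (n + 1))) / 2) *
    Real.sin (Afun hmd θ s / 2) *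
    (-Real.sin ((Afun hmd θ s + θ (Fin.last (n + 1)) * s (Fin.castLE hmd (Fin.last (n + 1)))) / 2) *
      (s (Fin.castLE hmd k.castSucc) / 2) *
      (s (Fin.castLE hmd (Fin.last (n + 1))) / 2)))

lemma A_update_last (hmd : n + 2 ≤ d) (θ : Fin (n + 2) → ℝ) (t : ℝ)
    (s : EuclideanSpace ℝ (Fin d)) :
    Afun hmd (Function.update θ (Fin.last (n + 1)) t) s = Afun hmd θ s := by
  unfold Afun
  refine Finset.sum_congr rfl fun j _ => ?_
  rw [Function.update_of_ne (Fin.castSucc_lt_last j).ne]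

lemma hasDerivAt_Afun (hmd : n + 2 ≤ d) (θ : Fin (n + 2) → ℝ) (k : Fin (n + 1))
    (s : EuclideanSpace ℝ (Fin d)) (t : ℝ) :
    HasDerivAt (fun t => Afun hmd (Function.update θ k.castSucc t) s)
      (s (Fin.castLE hmd k.castSucc)) t := by
  have key : ∀ j : Fin (n + 1), HasDerivAt
      (fun t => Function.update θ k.castSucc t j.castSucc * s (Fin.castLE hmd j.castSucc))
      (if j = k then s (Fin.castLE hmd j.castSucc) else 0) t := by
    intro j
    rcases eq_or_ne j k with rfl | hj
    · simp only [Function.update_self, if_pos]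
      simpa using (hasDerivAt_id t).mul_const (s (Fin.castLE hmd j.castSucc))
    · simp only [Function.update_of_ne (fun h => hj (Fin.castSucc_injective _ h)), if_neg hj]
      exact hasDerivAt_const t _
  have h := HasDerivAt.fun_sum (u := Finset.univ) (fun j _ => key j)
  simp only [Finset.sum_ite_eq', Finset.mem_univ, if_pos] at h
  unfold Afun
  exact h


lemma hasDerivAt_ffun (hmd : n + 2 ≤ d) (i₀ : Fin d) (θ : Fin (n + 2) → ℝ)
    (s : EuclideanSpace ℝ (Fin d)) (t : ℝ) :
    HasDerivAt (fun t => ffun hmd i₀ (Function.update θ (Fin.last (n + 1)) t) s)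
      (gfun hmd i₀ (Function.update θ (Fin.last (n + 1)) t) s) t := by
  set c := s (Fin.castLE hmd (Fin.last (n + 1))) with hc
  set a := Afun hmd θ s with ha
  simp only [ffun, gfun, A_update_last, Function.update_self, ← ha, ← hc]
  have h2 : HasDerivAt (fun t : ℝ => Real.sin (t * c / 2)) (Real.cos (t * c / 2) * (c / 2)) t := by
    simpa using (((hasDerivAt_id t).mul_const c).div_const 2).sin
  have h6 : HasDerivAt (fun t : ℝ => Real.sin ((a + t * c) / 2))
      (Real.cos ((a + t * c) / 2) * (c / 2)) t := by
    simpa using ((((hasDerivAt_id t).mul_const c).const_add a).div_const 2).sin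
  exact (((h2.const_mul (s i₀)).mul_const (Real.sin (a / 2))).mul h6)

lemma hasDerivAt_gfun (hmd : n + 2 ≤ d) (i₀ : Fin d) (k : Fin (n + 1)) (θ : Fin (n + 2) → ℝ)
    (s : EuclideanSpace ℝ (Fin d)) (t : ℝ) :
    HasDerivAt (fun t => gfun hmd i₀ (Function.update θ k.castSucc t) s)
      (hfun hmd i₀ k (Function.update θ k.castSucc t) s) t := by
  set c := s (Fin.castLE hmd (Fin.last (n + 1))) with hc
  set σk := s (Fin.castLE hmd k.castSucc) with hσ
  have hkL : k.castSucc ≠ Fin.last (n + 1) := (Fin.castSucc_lt_last k).ne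
  simp only [gfun, hfun, Function.update_of_ne (Fin.castSucc_lt_last k).ne', ← hc, ← hσ]
  set X := s i₀ * (Real.cos (θ (Fin.last (n + 1)) * c / 2) * (c / 2)) with hX
  set Y := s i₀ * Real.sin (θ (Fin.last (n + 1)) * c / 2) with hY
  have hA := hasDerivAt_Afun hmd θ k s t
  rw [← hσ] at hA
  have hsinu : HasDerivAt (fun t => Real.sin (Afun hmd (Function.update θ k.castSucc t) s / 2))
      (Real.cos (Afun hmd (Function.update θ k.castSucc t) s / 2) * (σk / 2)) t :=
    (hA.div_const 2).sin
  have hsinv : HasDerivAt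
      (fun t => Real.sin ((Afun hmd (Function.update θ k.castSucc t) s +
        θ (Fin.last (n + 1)) * c) / 2))
      (Real.cos ((Afun hmd (Function.update θ k.castSucc t) s +
        θ (Fin.last (n + 1)) * c) / 2) * (σk / 2)) t :=
    ((hA.add_const (θ (Fin.last (n + 1)) * c)).div_const 2).sin
  have hcosv : HasDerivAt
      (fun t => Real.cos ((Afun hmd (Function.update θ k.castSucc t) s +
        θ (Fin.last (n + 1)) * c) / 2))
      (-Real.sin ((Afun hmd (Function.update θ k.castSucc t) s +
        θ (Fin.last (n + 1)) * c) / 2) * (σk / 2)) t :=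
    ((hA.add_const (θ (Fin.last (n + 1)) * c)).div_const 2).cos
  exact ((hsinu.const_mul X).mul hsinv).add ((hsinu.const_mul Y).mul (hcosv.mul_const (c / 2)))


lemma continuous_ffun (hmd : n + 2 ≤ d) (i₀ : Fin d) (θ : Fin (n + 2) → ℝ) :
    Continuous (fun s => ffun hmd i₀ θ s) := by
  unfold ffun Afun; fun_prop

lemma continuous_gfun (hmd : n + 2 ≤ d) (i₀ : Fin d) (θ : Fin (n + 2) → ℝ) :
    Continuous (fun s => gfun hmd i₀ θ s) := by
  unfold gfun Afun; fun_prop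

lemma continuous_hfun (hmd : n + 2 ≤ d) (i₀ : Fin d) (k : Fin (n + 1)) (θ : Fin (n + 2) → ℝ) :
    Continuous (fun s => hfun hmd i₀ k θ s) := by
  unfold hfun Afun; fun_prop

lemma half_bnd {x : ℝ} (hx : |x| ≤ 1) : |x / 2| ≤ 1 := by
  rw [abs_div, abs_two]; linarith

lemma ffun_bound (hmd : n + 2 ≤ d) (i₀ : Fin d) (θ : Fin (n + 2) → ℝ)
    (s : EuclideanSpace ℝ (Fin d)) (hb : ∀ i, |s i| ≤ 1) : |ffun hmd i₀ θ s| ≤ 4 := by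
  have h1 := Real.abs_sin_le_one
  calc |ffun hmd i₀ θ s| ≤ 1 * 1 * 1 * 1 :=
        bnd (bnd (bnd (hb i₀) (h1 _)) (h1 _)) (h1 _)
    _ ≤ 4 := by norm_num

lemma gfun_bound (hmd : n + 2 ≤ d) (i₀ : Fin d) (θ : Fin (n + 2) → ℝ)
    (s : EuclideanSpace ℝ (Fin d)) (hb : ∀ i, |s i| ≤ 1) : |gfun hmd i₀ θ s| ≤ 4 := by
  have h1 := Real.abs_sin_le_one
  have h2 := Real.abs_cos_le_one
  have hc := half_bnd (hb (Fin.castLE hmd (Fin.last (n + 1))))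
  calc |gfun hmd i₀ θ s| ≤ |_| + |_| := abs_add_le _ _
    _ ≤ 1 * (1 * 1) * 1 * 1 + 1 * 1 * 1 * (1 * 1) := by
        gcongr ?_ + ?_
        · exact bnd (bnd (bnd (hb i₀) (bnd (h2 _) hc)) (h1 _)) (h1 _)
        · exact bnd (bnd (bnd (hb i₀) (h1 _)) (h1 _)) (bnd (h2 _) hc)
    _ ≤ 4 := by norm_num

lemma hfun_bound (hmd : n + 2 ≤ d) (i₀ : Fin d) (k : Fin (n + 1)) (θ : Fin (n + 2) → ℝ)
    (s : EuclideanSpace ℝ (Fin d)) (hb : ∀ i, |s i| ≤ 1) : |hfun hmd i₀ k θ s| ≤ 4 := by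
  have h1 := Real.abs_sin_le_one
  have h2 := Real.abs_cos_le_one
  have hc := half_bnd (hb (Fin.castLE hmd (Fin.last (n + 1))))
  have hk := half_bnd (hb (Fin.castLE hmd k.castSucc))
  have hn : ∀ x : ℝ, |(-Real.sin x)| ≤ 1 := fun x => by rw [abs_neg]; exact h1 x
  calc |hfun hmd i₀ k θ s|
      ≤ |_ + _| + |_ + _| := abs_add_le _ _
    _ ≤ (|_| + |_|) + (|_| + |_|) := by gcongr <;> exact abs_add_le _ _
    _ ≤ (1 * (1 * 1) * (1 * 1) * 1 + 1 * (1 * 1) * 1 * (1 * 1)) +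
        (1 * 1 * (1 * 1) * (1 * 1) + 1 * 1 * 1 * (1 * 1 * 1)) := by
        gcongr (?_ + ?_) + (?_ + ?_)
        · exact bnd (bnd (bnd (hb i₀) (bnd (h2 _) hc)) (bnd (h2 _) hk)) (h1 _)
        · exact bnd (bnd (bnd (hb i₀) (bnd (h2 _) hc)) (h1 _)) (bnd (h2 _) hk)
        · exact bnd (bnd (bnd (hb i₀) (h1 _)) (bnd (h2 _) hk)) (bnd (h2 _) hc)
        · exact bnd (bnd (bnd (hb i₀) (h1 _)) (h1 _)) (bnd (bnd (hn _) hk) hc)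
    _ ≤ 4 := by norm_num


open Metric in
lemma hasDerivAt_integral_param {α : Type*} [MeasurableSpace α] {μ : Measure α}
    [IsFiniteMeasure μ] (F F' : ℝ → α → ℝ)
    (hFm : ∀ x, AEStronglyMeasurable (F x) μ)
    (hF'm : ∀ x, AEStronglyMeasurable (F' x) μ)
    (hFb : ∀ᵐ a ∂μ, ∀ x, |F x a| ≤ 4)
    (hF'b : ∀ᵐ a ∂μ, ∀ x, |F' x a| ≤ 4)
    (hdiff : ∀ᵐ a ∂μ, ∀ x, HasDerivAt (fun y => F y a) (F' x a) x) (x₀ : ℝ) :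
    HasDerivAt (fun x => ∫ a, F x a ∂μ) (∫ a, F' x₀ a ∂μ) x₀ := by
  have hint : Integrable (F x₀) μ :=
    (integrable_const (4 : ℝ)).mono' (hFm x₀)
      (hFb.mono fun a ha => by simpa [Real.norm_eq_abs] using ha x₀)
  exact (hasDerivAt_integral_of_dominated_loc_of_deriv_le (bound := fun _ => (4 : ℝ))
    (Metric.ball_mem_nhds x₀ one_pos) (Filter.Eventually.of_forall hFm) hint (hF'm x₀)
    (hF'b.mono fun a ha x _ => by simpa [Real.norm_eq_abs] using ha x)
    (integrable_const 4)
    (hdiff.mono fun a ha x _ => ha x)).2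

end Stmt14Aux

open Stmt14Aux

/-- Statement 14, with `m = n + 2` (so that `2 ≤ m ≤ d`). -/
theorem stmt14 (d n : ℕ) (hmd : n + 2 ≤ d)
    (Γ : Measure (EuclideanSpace ℝ (Fin d))) [IsFiniteMeasure Γ]
    (hsupp : Γ {s : EuclideanSpace ℝ (Fin d) | ‖s‖ = 1}ᶜ = 0)
    (i₀ : Fin d)
    (Δ : (Fin (n + 2) → ℝ) → ℝ)
    (hΔ : ∀ θ : Fin (n + 2) → ℝ, Δ θ =
      ∫ s, s i₀ *
        Real.sin (θ (Fin.last (n + 1)) * s (Fin.castLE hmd (Fin.last (n + 1))) / 2) *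
        Real.sin ((∑ j : Fin (n + 1), θ j.castSucc * s (Fin.castLE hmd j.castSucc)) / 2) *
        Real.sin ((∑ j : Fin (n + 2), θ j * s (Fin.castLE hmd j)) / 2) ∂Γ)
    (hmix : ∀ (k : Fin (n + 1)) (θ : Fin (n + 2) → ℝ),
      pderiv' k.castSucc (pderiv' (Fin.last (n + 1)) Δ) θ = 0) :
    ∀ θ : Fin (n + 2) → ℝ, Δ θ = 0 := by
  classical
  -- a.e. coordinate bounds
  have hae : ∀ᵐ s ∂Γ, ∀ i : Fin d, |s i| ≤ 1 := by
    have h1 : ∀ᵐ s ∂Γ, ‖s‖ = 1 := by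
      rw [MeasureTheory.ae_iff]
      simpa [Set.compl_setOf] using hsupp
    filter_upwards [h1] with s hs i
    calc |s i| ≤ ‖s‖ := coord_abs_le_norm s i
      _ ≤ 1 := le_of_eq hs
  -- rewrite Δ through ffun
  have hΔ' : ∀ θ, Δ θ = ∫ s, ffun hmd i₀ θ s ∂Γ := by
    intro θ
    rw [hΔ θ]
    congr 1
    funext s
    have hsum : (∑ j : Fin (n + 2), θ j * s (Fin.castLE hmd j))
        = (∑ j : Fin (n + 1), θ j.castSucc * s (Fin.castLE hmd j.castSucc)) +
          θ (Fin.last (n + 1)) * s (Fin.castLE hmd (Fin.last (n + 1))) :=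
      Fin.sum_univ_castSucc fun j : Fin (n + 2) => θ j * s (Fin.castLE hmd j)
    rw [hsum]
    simp [ffun, Afun]
  set G : (Fin (n + 2) → ℝ) → ℝ := fun θ => ∫ s, gfun hmd i₀ θ s ∂Γ with hGdef
  -- D1 : derivative of Δ in direction last
  have hD1 : ∀ (θ : Fin (n + 2) → ℝ) (t : ℝ),
      HasDerivAt (fun t => Δ (Function.update θ (Fin.last (n + 1)) t))
        (G (Function.update θ (Fin.last (n + 1)) t)) t := by
    intro θ t
    have key := hasDerivAt_integral_param (μ := Γ)
      (fun x s => ffun hmd i₀ (Function.update θ (Fin.last (n + 1)) x) s)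
      (fun x s => gfun hmd i₀ (Function.update θ (Fin.last (n + 1)) x) s)
      (fun x => (continuous_ffun hmd i₀ _).aestronglyMeasurable)
      (fun x => (continuous_gfun hmd i₀ _).aestronglyMeasurable)
      (hae.mono fun s hs x => ffun_bound hmd i₀ _ s hs)
      (hae.mono fun s hs x => gfun_bound hmd i₀ _ s hs)
      (Filter.Eventually.of_forall fun s x => hasDerivAt_ffun hmd i₀ θ s x)
      t
    have heq : (fun x => ∫ s, ffun hmd i₀ (Function.update θ (Fin.last (n + 1)) x) s ∂Γ)
        = fun x => Δ (Function.update θ (Fin.last (n + 1)) x) :=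
      funext fun x => (hΔ' _).symm
    rw [heq] at key
    exact key
  -- D2 : derivative of G in direction k.castSucc
  have hD2 : ∀ (k : Fin (n + 1)) (θ : Fin (n + 2) → ℝ) (t : ℝ),
      HasDerivAt (fun t => G (Function.update θ k.castSucc t))
        (∫ s, hfun hmd i₀ k (Function.update θ k.castSucc t) s ∂Γ) t := by
    intro k θ t
    exact hasDerivAt_integral_param (μ := Γ)
      (fun x s => gfun hmd i₀ (Function.update θ k.castSucc x) s)
      (fun x s => hfun hmd i₀ k (Function.update θ k.castSucc x) s)
      (fun x => (continuous_gfun hmd i₀ _).aestronglyMeasurable)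
      (fun x => (continuous_hfun hmd i₀ k _).aestronglyMeasurable)
      (hae.mono fun s hs x => gfun_bound hmd i₀ _ s hs)
      (hae.mono fun s hs x => hfun_bound hmd i₀ k _ s hs)
      (Filter.Eventually.of_forall fun s x => hasDerivAt_gfun hmd i₀ k θ s x)
      t
  -- pderiv' last Δ = G
  have hGL : pderiv' (Fin.last (n + 1)) Δ = G := by
    funext θ
    have h := (hD1 θ (θ (Fin.last (n + 1)))).deriv
    rw [Function.update_eq_self] at h
    simpa [pderiv'] using h
  -- G constant along castSucc directions
  have hconst : ∀ (k : Fin (n + 1)) (θ : Fin (n + 2) → ℝ) (t t' : ℝ),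
      G (Function.update θ k.castSucc t) = G (Function.update θ k.castSucc t') := by
    intro k θ t t'
    have hdiff : Differentiable ℝ (fun t => G (Function.update θ k.castSucc t)) :=
      fun x => (hD2 k θ x).differentiableAt
    have hder : ∀ x, deriv (fun t => G (Function.update θ k.castSucc t)) x = 0 := by
      intro x
      have hm := hmix k (Function.update θ k.castSucc x)
      rw [hGL] at hm
      simp only [pderiv', Function.update_idem, Function.update_self] at hm
      exact hm
    exact is_const_of_deriv_eq_zero hdiff hder t t'
  -- zero out the first n+1 coordinates
  have hzero : ∀ j : ℕ, j ≤ n + 1 → ∀ θ : Fin (n + 2) → ℝ,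
      G θ = G (fun i => if (i : ℕ) < j then 0 else θ i) := by
    intro j
    induction j with
    | zero => intro _ θ; simp
    | succ j ih =>
      intro hj θ
      have hjn : j < n + 1 := hj
      set k : Fin (n + 1) := ⟨j, hjn⟩ with hk
      set X : Fin (n + 2) → ℝ := fun i => if (i : ℕ) < j then 0 else θ i with hX
      have h1 : (fun i : Fin (n + 2) => if (i : ℕ) < j + 1 then 0 else θ i)
          = Function.update X k.castSucc 0 := by
        funext i
        rw [Function.update_apply]
        by_cases hij : i = k.castSucc
        · subst hij
          simp [hk]
        · have hne : (i : ℕ) ≠ j := by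
            intro h
            apply hij
            apply Fin.ext
            simp [hk, h]
          simp only [hX, if_neg hij]
          by_cases h2 : (i : ℕ) < j
          · rw [if_pos (by omega), if_pos h2]
          · rw [if_neg (by omega), if_neg h2]
      rw [ih (by omega) θ, h1]
      calc G X = G (Function.update X k.castSucc (X k.castSucc)) := by
            rw [Function.update_eq_self]
        _ = G (Function.update X k.castSucc 0) := hconst k X _ 0
  -- Δ vanishes when the first n+1 coordinates vanish
  have hvanish : ∀ θ : Fin (n + 2) → ℝ, (∀ j : Fin (n + 1), θ j.castSucc = 0) → Δ θ = 0 := by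
    intro θ h
    rw [hΔ' θ]
    have hz : ∀ s, ffun hmd i₀ θ s = 0 := by
      intro s
      have hA : Afun hmd θ s = 0 := by
        unfold Afun
        simp [h]
      simp [ffun, hA]
    simp only [hz, integral_zero]
  -- G vanishes identically
  have hGzero : ∀ θ, G θ = 0 := by
    intro θ
    set X : Fin (n + 2) → ℝ := fun i => if (i : ℕ) < n + 1 then 0 else θ i with hX
    have h1 : G θ = G X := hzero (n + 1) le_rfl θ
    have h2 : ∀ t, Δ (Function.update X (Fin.last (n + 1)) t) = 0 := by
      intro t
      apply hvanish
      intro j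
      rw [Function.update_of_ne (Fin.castSucc_lt_last j).ne]
      simp [hX]; omega
    have h3 := (hD1 X (X (Fin.last (n + 1)))).deriv
    rw [Function.update_eq_self] at h3
    have h4 : (fun t => Δ (Function.update X (Fin.last (n + 1)) t)) = fun _ => (0 : ℝ) :=
      funext h2
    rw [h4, deriv_const] at h3
    rw [h1, ← h3]
  -- conclude
  intro θ
  have hdiff : Differentiable ℝ (fun t => Δ (Function.update θ (Fin.last (n + 1)) t)) :=
    fun x => (hD1 θ x).differentiableAt
  have hder : ∀ x, deriv (fun t => Δ (Function.update θ (Fin.last (n + 1)) t)) x = 0 := by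
    intro x
    rw [(hD1 θ x).deriv, hGzero]
  have hc := is_const_of_deriv_eq_zero hdiff hder (θ (Fin.last (n + 1))) 0
  rw [Function.update_eq_self] at hc
  rw [hc]
  rw [hΔ']
  have hz : ∀ s, ffun hmd i₀ (Function.update θ (Fin.last (n + 1)) 0) s = 0 := by
    intro s
    simp [ffun]
  simp only [hz, integral_zero]
end

section
/- Let F be a complex Borel measure on ℝ² (so its total variation measure |F| is finite) and define C : ℝ × ℝ → ℂ by C(s,t) = ∫_{ℝ²} e^{i(sλ − tλ')} dF(λ,λ'). Then C(s+h, t+h) = C(s,t) for all s, t, h ∈ ℝ if and only if F is concentrated on the diagonal, i.e. |F|({(λ,λ') ∈ ℝ² : λ ≠ λ'}) = 0. -/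
open MeasureTheory Real FourierTransform
open scoped ContDiff InnerProductSpace RealInnerProductSpace

set_option maxHeartbeats 1000000
noncomputable section

abbrev V2 := EuclideanSpace ℝ (Fin 2)

def toSchwartz (ψ : V2 → ℂ) (h1 : ContDiff ℝ ∞ ψ) (h2 : HasCompactSupport ψ) :
    SchwartzMap V2 ℂ where
  toFun := ψ
  smooth' := h1
  decay' := by
    intro k n
    have hc : Continuous fun x : V2 => ‖x‖ ^ k * ‖iteratedFDeriv ℝ n ψ x‖ :=
      (continuous_norm.pow k).mul
        (h1.continuous_iteratedFDeriv (by exact_mod_cast le_top)).norm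
    have hcs : HasCompactSupport fun x : V2 => ‖x‖ ^ k * ‖iteratedFDeriv ℝ n ψ x‖ :=
      ((h2.iteratedFDeriv n).norm).mul_left
    obtain ⟨C, hC⟩ := hcs.exists_bound_of_continuous hc
    refine ⟨C, fun x => ?_⟩
    have := hC x
    rwa [Real.norm_eq_abs, abs_of_nonneg (by positivity)] at this

lemma key_unique (ν : Measure V2) [IsFiniteMeasure ν] (G : V2 → ℂ)
    (hG : Measurable G) (hGb : ∀ v, ‖G v‖ ≤ 2)
    (h : ∀ w : V2, ∫ v, Complex.exp ((⟪v, w⟫_ℝ : ℂ) * Complex.I) * G v ∂ν = 0) :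
    ∀ᵐ v ∂ν, G v = 0 := by
  have hGi : Integrable G ν :=
    Integrable.mono' (integrable_const 2) hG.aestronglyMeasurable
      (Filter.Eventually.of_forall fun v => by
        simpa using hGb v)
  apply ae_eq_zero_of_integral_contDiff_smul_eq_zero (hGi.locallyIntegrable)
  intro ψ hψ hψc
  set Ψc : V2 → ℂ := fun x => (ψ x : ℂ) with hΨc
  have hΨcd : ContDiff ℝ ∞ Ψc := Complex.ofRealCLM.contDiff.comp hψ
  have hΨcs : HasCompactSupport Ψc := hψc.comp_left (g := Complex.ofReal) (by simp)
  set Θ : SchwartzMap V2 ℂ :=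
    (SchwartzMap.fourierTransformCLE ℂ (SchwartzMap V2 ℂ)).symm (toSchwartz Ψc hΨcd hΨcs) with hΘ
  have hFT : ∀ x : V2, Ψc x = 𝓕 (⇑Θ) x := by
    intro x
    have h1 : (SchwartzMap.fourierTransformCLE ℂ (SchwartzMap V2 ℂ)) Θ = toSchwartz Ψc hΨcd hΨcs :=
      (SchwartzMap.fourierTransformCLE ℂ (SchwartzMap V2 ℂ)).apply_symm_apply _
    calc Ψc x = (toSchwartz Ψc hΨcd hΨcs) x := rfl
      _ = ((SchwartzMap.fourierTransformCLE ℂ (SchwartzMap V2 ℂ)) Θ) x := by rw [h1]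
      _ = 𝓕 (⇑Θ) x := rfl
  -- the heavy Fubini computation
  have key : ∫ v, Ψc v * G v ∂ν = 0 := by
    have hswap :
        ∫ v, ∫ ξ, Complex.exp (↑(-2 * π * ⟪ξ, v⟫_ℝ) * Complex.I) * Θ ξ * G v ∂volume ∂ν
        = ∫ ξ, ∫ v, Complex.exp (↑(-2 * π * ⟪ξ, v⟫_ℝ) * Complex.I) * Θ ξ * G v ∂ν ∂volume := by
      apply integral_integral_swap
      have hmeas : AEStronglyMeasurable
          (fun p : V2 × V2 => Complex.exp (↑(-2 * π * ⟪p.2, p.1⟫_ℝ) * Complex.I) * Θ p.2 * G p.1)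
          (ν.prod volume) := by
        apply Measurable.aestronglyMeasurable
        have hinner : Measurable fun p : V2 × V2 => ⟪p.2, p.1⟫_ℝ :=
          (continuous_inner.comp (continuous_snd.prodMk continuous_fst)).measurable
        exact ((Complex.measurable_exp.comp
            ((Complex.measurable_ofReal.comp (hinner.const_mul _)).mul measurable_const)).mul
            ((Θ.continuous.measurable).comp measurable_snd)).mul (hG.comp measurable_fst)
      apply Integrable.mono' ((integrable_const (2:ℝ)).mul_prod Θ.integrable.norm) hmeas
      refine Filter.Eventually.of_forall fun p => ?_
      have : ‖Complex.exp (↑(-2 * π * ⟪p.2, p.1⟫_ℝ) * Complex.I)‖ = 1 := by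
        rw [Complex.norm_exp_ofReal_mul_I]
      rw [norm_mul, norm_mul, this, one_mul]
      have h2 : ‖G p.1‖ ≤ 2 := by simpa using hGb p.1
      calc ‖(Θ : V2 → ℂ) p.2‖ * ‖G p.1‖ ≤ ‖(Θ : V2 → ℂ) p.2‖ * 2 :=
            mul_le_mul_of_nonneg_left h2 (norm_nonneg _)
        _ = 2 * ‖(Θ : V2 → ℂ) p.2‖ := by ring
    calc ∫ v, Ψc v * G v ∂ν
        = ∫ v, (∫ ξ, Complex.exp (↑(-2 * π * ⟪ξ, v⟫_ℝ) * Complex.I) * Θ ξ ∂volume) * G v ∂ν := by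
          refine integral_congr_ae (Filter.Eventually.of_forall fun v => ?_)
          beta_reduce
          rw [hFT v, Real.fourier_eq']
          simp_rw [smul_eq_mul]
      _ = ∫ v, ∫ ξ, Complex.exp (↑(-2 * π * ⟪ξ, v⟫_ℝ) * Complex.I) * Θ ξ * G v ∂volume ∂ν := by
          refine integral_congr_ae (Filter.Eventually.of_forall fun v => ?_)
          beta_reduce
          rw [← integral_mul_const]
      _ = ∫ ξ, ∫ v, Complex.exp (↑(-2 * π * ⟪ξ, v⟫_ℝ) * Complex.I) * Θ ξ * G v ∂ν ∂volume := hswap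
      _ = 0 := by
          refine integral_eq_zero_of_ae (Filter.Eventually.of_forall fun ξ => ?_)
          have : ∀ v : V2, Complex.exp (↑(-2 * π * ⟪ξ, v⟫_ℝ) * Complex.I) * Θ ξ * G v
              = Θ ξ * (Complex.exp ((⟪v, (-2 * π) • ξ⟫_ℝ : ℂ) * Complex.I) * G v) := by
            intro v
            rw [real_inner_smul_right, real_inner_comm v ξ]
            ring
          simp_rw [this, integral_const_mul, h ((-2 * π) • ξ), mul_zero]
          simp
  rw [show ∫ x, ψ x • G x ∂ν = ∫ v, Ψc v * G v ∂ν by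
    refine integral_congr_ae (Filter.Eventually.of_forall fun v => ?_)
    simp [hΨc, Complex.real_smul], key]

/-- The measurable equivalence between `EuclideanSpace ℝ (Fin 2)` and `ℝ × ℝ`. -/
def e2 : V2 ≃ᵐ ℝ × ℝ :=
  (MeasurableEquiv.toLp 2 (Fin 2 → ℝ)).symm.trans (MeasurableEquiv.finTwoArrow)

lemma key2 (μ : Measure (ℝ × ℝ)) [IsFiniteMeasure μ] (g : ℝ × ℝ → ℂ)
    (hg : Measurable g) (hb : ∀ x, ‖g x‖ ≤ 2)
    (h : ∀ s t : ℝ, ∫ x, Complex.exp (((s * x.1 + t * x.2 : ℝ) : ℂ) * Complex.I) * g x ∂μ = 0) :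
    ∀ᵐ x ∂μ, g x = 0 := by
  set ν : Measure V2 := μ.map e2.symm with hν
  have : IsFiniteMeasure ν := by
    constructor
    rw [hν, MeasurableEquiv.map_apply]
    exact measure_lt_top μ _
  have hGmeas : Measurable fun v : V2 => g (e2 v) := hg.comp e2.measurable
  have hinner : ∀ (w : V2) (x : ℝ × ℝ), ⟪e2.symm x, w⟫_ℝ = w 0 * x.1 + w 1 * x.2 := by
    intro w x
    have h0 : (e2.symm x) 0 = x.1 := rfl
    have h1 : (e2.symm x) 1 = x.2 := rfl
    simp [PiLp.inner_apply, RCLike.inner_apply, Fin.sum_univ_two, h0, h1, mul_comm]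
  have h0 : ∀ w : V2,
      ∫ v, Complex.exp ((⟪v, w⟫_ℝ : ℂ) * Complex.I) * g (e2 v) ∂ν = 0 := by
    intro w
    rw [hν, MeasureTheory.integral_map_equiv]
    have : ∀ x : ℝ × ℝ,
        Complex.exp ((⟪e2.symm x, w⟫_ℝ : ℂ) * Complex.I) * g (e2 (e2.symm x))
        = Complex.exp (((w 0 * x.1 + w 1 * x.2 : ℝ) : ℂ) * Complex.I) * g x := by
      intro x
      rw [hinner, e2.apply_symm_apply]
    simp_rw [this]
    exact h (w 0) (w 1)
  have hae := key_unique ν (fun v => g (e2 v)) hGmeas (fun v => hb _) h0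
  rw [hν] at hae
  have hae2 := (MeasureTheory.ae_map_iff (p := fun v : V2 => g (e2 v) = 0)
    e2.symm.measurable.aemeasurable (hGmeas (measurableSet_singleton (0:ℂ)))).mp hae
  filter_upwards [hae2] with x hx
  rwa [e2.apply_symm_apply] at hx

lemma exp_mul_I_abs (r : ℝ) : ‖Complex.exp ((r : ℂ) * Complex.I)‖ = 1 :=
  Complex.norm_exp_ofReal_mul_I r

lemma exp_I_mul_abs (r : ℝ) : ‖(Complex.exp (Complex.I * (r : ℂ)))‖ = 1 := by
  rw [mul_comm]; exact exp_mul_I_abs r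

/-- A complex Borel measure `F` on `ℝ²` is encoded by its polar decomposition
`dF = f dμ`, where `μ = |F|` is the (finite) total variation measure and `f` is a
measurable density of modulus one.  `C(s,t) = ∫ e^{i(sλ - tλ')} dF(λ,λ')` is covariation
stationary iff `F` is concentrated on the diagonal. -/
theorem stmt17 (μ : Measure (ℝ × ℝ)) [IsFiniteMeasure μ]
    (f : ℝ × ℝ → ℂ) (hf_meas : Measurable f) (hf : ∀ x, ‖f x‖ = 1)
    (C : ℝ → ℝ → ℂ)
    (hC : ∀ s t : ℝ, C s t =
      ∫ x : ℝ × ℝ, Complex.exp (Complex.I * ((s * x.1 - t * x.2 : ℝ) : ℂ)) * f x ∂μ) :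
    (∀ s t h : ℝ, C (s + h) (t + h) = C s t) ↔ μ {x : ℝ × ℝ | x.1 ≠ x.2} = 0 := by
  have hfne : ∀ x, f x ≠ 0 := by
    intro x hx
    have := hf x
    rw [hx] at this
    simp at this
  constructor
  · intro H
    have hmeas1 : ∀ a b : ℝ,
        Measurable fun x : ℝ × ℝ => Complex.exp (Complex.I * ((a * x.1 - b * x.2 : ℝ) : ℂ)) * f x := by
      intro a b
      exact (Complex.measurable_exp.comp (measurable_const.mul
        (Complex.measurable_ofReal.comp
          ((measurable_fst.const_mul a).sub (measurable_snd.const_mul b))))).mul hf_meas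
    have hint : ∀ a b : ℝ,
        Integrable (fun x : ℝ × ℝ => Complex.exp (Complex.I * ((a * x.1 - b * x.2 : ℝ) : ℂ)) * f x) μ := by
      intro a b
      refine Integrable.mono' (integrable_const 1) (hmeas1 a b).aestronglyMeasurable
        (Filter.Eventually.of_forall fun x => ?_)
      rw [norm_mul, hf x, mul_one, exp_I_mul_abs]
    have main : ∀ h : ℝ, ∀ᵐ x ∂μ,
        (Complex.exp (((h * (x.1 - x.2) : ℝ) : ℂ) * Complex.I) - 1) * f x = 0 := by
      intro h
      apply key2 μ _ ?_ ?_ ?_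
      · exact ((Complex.measurable_exp.comp
          ((Complex.measurable_ofReal.comp
            ((measurable_fst.sub measurable_snd).const_mul h)).mul measurable_const)).sub
          measurable_const).mul hf_meas
      · intro x
        rw [norm_mul, hf x, mul_one]
        calc ‖Complex.exp (((h * (x.1 - x.2) : ℝ) : ℂ) * Complex.I) - 1‖
            ≤ ‖Complex.exp (((h * (x.1 - x.2) : ℝ) : ℂ) * Complex.I)‖ + ‖(1 : ℂ)‖ := norm_sub_le _ _
          _ = 2 := by rw [exp_mul_I_abs]; norm_num
      · intro s t
        have key_eq : ∫ x : ℝ × ℝ, Complex.exp (((s * x.1 + t * x.2 : ℝ) : ℂ) * Complex.I) *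
              ((Complex.exp (((h * (x.1 - x.2) : ℝ) : ℂ) * Complex.I) - 1) * f x) ∂μ
            = C (s + h) (-t + h) - C s (-t) := by
          rw [hC, hC, ← integral_sub (hint (s + h) (-t + h)) (hint s (-t))]
          refine integral_congr_ae (Filter.Eventually.of_forall fun x => ?_)
          beta_reduce
          have expand : Complex.I * (((s + h) * x.1 - (-t + h) * x.2 : ℝ) : ℂ)
              = ((s * x.1 + t * x.2 : ℝ) : ℂ) * Complex.I
                + ((h * (x.1 - x.2) : ℝ) : ℂ) * Complex.I := by push_cast; ring
          have expand2 : Complex.I * ((s * x.1 - -t * x.2 : ℝ) : ℂ)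
              = ((s * x.1 + t * x.2 : ℝ) : ℂ) * Complex.I := by push_cast; ring
          rw [expand, expand2, Complex.exp_add]
          ring
        rw [key_eq, H s (-t) h, sub_self]
    have h1 := main 1
    have h2 := main (2 * π)
    have hae : ∀ᵐ x ∂μ, x.1 = x.2 := by
      filter_upwards [h1, h2] with x hx1 hx2
      have he1 : Complex.exp (((1 * (x.1 - x.2) : ℝ) : ℂ) * Complex.I) = 1 := by
        have := (mul_eq_zero.mp hx1).resolve_right (hfne x)
        linear_combination this
      have he2 : Complex.exp (((2 * π * (x.1 - x.2) : ℝ) : ℂ) * Complex.I) = 1 := by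
        have := (mul_eq_zero.mp hx2).resolve_right (hfne x)
        linear_combination this
      obtain ⟨n, hn⟩ := Complex.exp_eq_one_iff.mp he1
      obtain ⟨m, hm⟩ := Complex.exp_eq_one_iff.mp he2
      set d : ℝ := x.1 - x.2 with hd
      have hdn : d = n * (2 * π) := by
        have hc : ((1 * d : ℝ) : ℂ) * Complex.I = (((n : ℝ) * (2 * π) : ℝ) : ℂ) * Complex.I := by
          push_cast at hn ⊢
          linear_combination hn
        have := Complex.ofReal_injective (mul_right_cancel₀ Complex.I_ne_zero hc)
        push_cast at this
        linarith
      have hdm : 2 * π * d = m * (2 * π) := by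
        have hc : ((2 * π * d : ℝ) : ℂ) * Complex.I
            = (((m : ℝ) * (2 * π) : ℝ) : ℂ) * Complex.I := by
          push_cast at hm ⊢
          linear_combination hm
        have := Complex.ofReal_injective (mul_right_cancel₀ Complex.I_ne_zero hc)
        push_cast at this
        linarith
      have h2π : (2 * π : ℝ) ≠ 0 := by positivity
      have hdm' : d = m := by
        have h' : (2 * π) * d = (2 * π) * m := by linarith
        exact mul_left_cancel₀ h2π h'
      rcases eq_or_ne n 0 with hn0 | hn0
      · have hd0 : x.1 - x.2 = 0 := by
          have : d = 0 := by rw [hdn, hn0]; simp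
          rw [hd] at this
          exact this
        linarith
      · exfalso
        have h2n : (2 * (n : ℝ)) ≠ 0 := by
          simp [Int.cast_ne_zero.mpr hn0]
        have hmn : (m : ℝ) = 2 * π * n := by rw [← hdm', hdn]; ring
        have hπval : (π : ℝ) = (m : ℝ) / (2 * n) := by
          rw [hmn]
          field_simp
        exact irrational_pi ⟨(m : ℚ) / (2 * n), by push_cast; exact hπval.symm⟩
    exact MeasureTheory.ae_iff.mp hae
  · intro hdiag s t h
    rw [hC, hC]
    have hae : ∀ᵐ x ∂μ, x.1 = x.2 := MeasureTheory.ae_iff.mpr hdiag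
    refine integral_congr_ae ?_
    filter_upwards [hae] with x hx
    have : ((s + h) * x.1 - (t + h) * x.2 : ℝ) = (s * x.1 - t * x.2 : ℝ) := by
      rw [hx]; ring
    rw [this]

end
end
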